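/- For every integer N ≥ 2, with M = 4^{N+1}, m = (3/4)^N·M, and any 0 < ε < 1/(8M), there exists a colorful bin packing instance with OPT = M on which every run of BaP uses at least 4M − m bins. The instance is: the zero-size three-color input of N phases (phase 0 of M white items; phase i of a_i·M/2 red, (1 − a_i/2)·M blue, and M white items, with a_i = 2 − (3/4)^{i−1}), followed by 2M − m − 1 items of pairwise distinct new colors (none equal to white, red, blue, or black) each of size 2ε, then M − 1 black items each of size 1 − ε, then M − 2 items of pairwise distinct new colors each of size 2ε. Consequently, the asymptotic competitive ratio of BaP is at least 4. -/

import Mathlib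

/-- A packing of the instance with `n` items, sizes `s` and colors `c` (items are indexed
`1,…,n`) into bins `1,…,L`: each bin has total size at most `1`, and two items packed
consecutively into the same bin have different colors. -/
def IsPacking {γ : Type*} (n L : ℕ) (s : ℕ → ℝ) (c : ℕ → γ) (f : ℕ → ℕ) : Prop :=
  (∀ t, 1 ≤ t → t ≤ n → 1 ≤ f t ∧ f t ≤ L) ∧
  (∀ b, (∑ l ∈ (Finset.Icc 1 n).filter fun l => f l = b, s l) ≤ 1) ∧
  (∀ i j, 1 ≤ i → i < j → j ≤ n → f i = f j →
    (∀ l, i < l → l < j → f l ≠ f i) → c i ≠ c j)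

/-- `OPTcost n s c` is the minimum number of bins over all packings of the instance. -/
noncomputable def OPTcost {γ : Type*} (n : ℕ) (s : ℕ → ℝ) (c : ℕ → γ) : ℕ :=
  sInf {L | ∃ f, IsPacking n L s c f}

/-- A run of the algorithm Balanced-Pseudo (BaP) on an instance of `n` items with colors
`color 1, …, color n`.  `assign t` is the (1-based) index of the pseudo-bin receiving item `t`,
`nbins t` is the number of pseudo-bins after items `1,…,t` have been processed, and
`bcolor t j` is the color of pseudo-bin `j` after items `1,…,t` have been processed
(the color of the last item assigned to it).  When item `t` arrives, either all existing
pseudo-bins have color `color t` and a new pseudo-bin is opened, or item `t` is assigned to an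
existing pseudo-bin whose color `g` differs from `color t` and is such that the number of
pseudo-bins of color `g` is maximal among colors different from `color t` (ties arbitrary). -/
structure BaPRun (n : ℕ) {γ : Type*} [DecidableEq γ] (color : ℕ → γ) where
  assign : ℕ → ℕ
  nbins : ℕ → ℕ
  bcolor : ℕ → ℕ → γ
  nbins_zero : nbins 0 = 0
  step : ∀ t, 1 ≤ t → t ≤ n →
    (assign t = nbins (t - 1) + 1 ∧ nbins t = nbins (t - 1) + 1 ∧
      ∀ j, 1 ≤ j → j ≤ nbins (t - 1) → bcolor (t - 1) j = color t) ∨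
    (1 ≤ assign t ∧ assign t ≤ nbins (t - 1) ∧ nbins t = nbins (t - 1) ∧
      bcolor (t - 1) (assign t) ≠ color t ∧
      ∀ g, g ≠ color t →
        ((Finset.Icc 1 (nbins (t - 1))).filter fun j => bcolor (t - 1) j = g).card ≤
          ((Finset.Icc 1 (nbins (t - 1))).filter fun j =>
            bcolor (t - 1) j = bcolor (t - 1) (assign t)).card)
  bcolor_step : ∀ t, 1 ≤ t → t ≤ n → ∀ j,
    bcolor t j = if j = assign t then color t else bcolor (t - 1) j

/-- `R.Y m` is the index of the first item assigned to pseudo-bin `m`. -/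
noncomputable def BaPRun.Y {n : ℕ} {γ : Type*} [DecidableEq γ] {c : ℕ → γ}
    (R : BaPRun n c) (m : ℕ) : ℕ :=
  sInf {t | 1 ≤ t ∧ t ≤ n ∧ R.assign t = m}

/-- The number of pseudo-bins of color `g` just after items `1,…,t` have been processed. -/
def BaPRun.binsOfColor {n : ℕ} {γ : Type*} [DecidableEq γ] {c : ℕ → γ}
    (R : BaPRun n c) (t : ℕ) (g : γ) : ℕ :=
  ((Finset.Icc 1 (R.nbins t)).filter fun j => R.bcolor t j = g).card

/-- Number of further bins opened by Next Fit on the list `l` of item sizes when the current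
bin already has load `load`. -/
noncomputable def nfExtra : List ℝ → ℝ → ℕ
  | [], _ => 0
  | a :: l, load => if load + a ≤ 1 then nfExtra l (load + a) else 1 + nfExtra l a

/-- Number of bins used by Next Fit on the list `l` of item sizes. -/
noncomputable def nfBins : List ℝ → ℕ
  | [] => 0
  | a :: l => 1 + nfExtra l a

/-- The total number of (actual) bins used by the run `R` of BaP: the items of each pseudo-bin
are split into bins, in order, by Next Fit. -/
noncomputable def bapCost {n : ℕ} {γ : Type*} [DecidableEq γ] {c : ℕ → γ}
    (s : ℕ → ℝ) (R : BaPRun n c) : ℕ :=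
  ∑ j ∈ Finset.Icc 1 (R.nbins n),
    nfBins ((((Finset.Icc 1 n).filter fun t => R.assign t = j).sort (· ≤ ·)).map s)

section NF

lemma nfExtra_nil (load : ℝ) : nfExtra [] load = 0 := rfl

lemma nfExtra_cons (a : ℝ) (l : List ℝ) (load : ℝ) :
    nfExtra (a :: l) load = if load + a ≤ 1 then nfExtra l (load + a) else 1 + nfExtra l a := rfl

lemma nfBins_cons (a : ℝ) (l : List ℝ) : nfBins (a :: l) = 1 + nfExtra l a := rfl

lemma nfExtra_zeros (k : ℕ) (l : List ℝ) (load : ℝ) (h1 : load ≤ 1) :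
    nfExtra (List.replicate k 0 ++ l) load = nfExtra l load := by
  induction k with
  | zero => simp
  | succ k ih =>
      simp only [List.replicate_succ, List.cons_append, nfExtra_cons, add_zero, if_pos h1]
      exact ih

lemma nfBins_zeros (k : ℕ) (l : List ℝ) :
    nfBins (List.replicate (k+1) (0:ℝ) ++ l) = 1 + nfExtra l 0 := by
  have : List.replicate (k+1) (0:ℝ) ++ l = 0 :: (List.replicate k 0 ++ l) := by
    simp [List.replicate_succ]
  rw [this, nfBins_cons, nfExtra_zeros k l 0 zero_le_one]

end NF

section RunLemmas

variable {n : ℕ} {c : ℕ → ℕ} (R : BaPRun n c)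

/-- items assigned to pseudo-bin `j` among the first `t` items -/
def binItems (t j : ℕ) : Finset ℕ := (Finset.Icc 1 t).filter fun u => R.assign u = j

lemma run_nbins_step {t : ℕ} (h1 : 1 ≤ t) (h2 : t ≤ n) :
    R.nbins t = R.nbins (t-1) ∨
      (R.nbins t = R.nbins (t-1) + 1 ∧ R.assign t = R.nbins (t-1) + 1) := by
  rcases R.step t h1 h2 with ⟨ha, hn, _⟩ | ⟨_, _, hn, _, _⟩
  · exact Or.inr ⟨hn, ha⟩
  · exact Or.inl hn

lemma run_nbins_le_step {t : ℕ} (h1 : 1 ≤ t) (h2 : t ≤ n) :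
    R.nbins (t-1) ≤ R.nbins t := by
  rcases run_nbins_step R h1 h2 with h | ⟨h, _⟩ <;> omega

lemma run_assign_le {t : ℕ} (h1 : 1 ≤ t) (h2 : t ≤ n) :
    1 ≤ R.assign t ∧ R.assign t ≤ R.nbins t := by
  rcases R.step t h1 h2 with ⟨ha, hn, _⟩ | ⟨ha1, ha2, hn, _, _⟩
  · omega
  · omega

/-- the color of a nonempty pseudo-bin is the color of its last item -/
lemma run_last_color : ∀ t, t ≤ n → ∀ j, 1 ≤ j → j ≤ R.nbins t →
    ∃ u ∈ binItems R t j, (∀ v ∈ binItems R t j, v ≤ u) ∧ R.bcolor t j = c u := by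
  intro t
  induction t with
  | zero => intro _ j hj1 hj2; rw [R.nbins_zero] at hj2; omega
  | succ t ih =>
    intro htn j hj1 hj2
    have h1 : 1 ≤ t + 1 := by omega
    have hsimp : t + 1 - 1 = t := rfl
    by_cases hja : j = R.assign (t+1)
    · refine ⟨t+1, ?_, ?_, ?_⟩
      · simp [binItems, Finset.mem_filter, Finset.mem_Icc, hja.symm]
      · intro v hv
        simp only [binItems, Finset.mem_filter, Finset.mem_Icc] at hv
        omega
      · rw [R.bcolor_step (t+1) h1 htn j]
        simp [hja]
    · have hbc : R.bcolor (t+1) j = R.bcolor t j := by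
        rw [R.bcolor_step (t+1) h1 htn j]
        simp [hja]
      have hjt : j ≤ R.nbins t := by
        rcases run_nbins_step R h1 htn with h | ⟨h, ha⟩
        · rw [hsimp] at h; omega
        · rw [hsimp] at h ha
          rcases Nat.lt_or_ge j (R.nbins t + 1) with h' | h'
          · omega
          · exfalso; exact hja (by omega)
      have hitems : binItems R (t+1) j = binItems R t j := by
        unfold binItems
        ext v
        simp only [Finset.mem_filter, Finset.mem_Icc]
        constructor
        · rintro ⟨⟨hv1, hv2⟩, hv3⟩
          refine ⟨⟨hv1, ?_⟩, hv3⟩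
          by_contra h'
          have hv : v = t+1 := by omega
          exact hja (by rw [← hv, hv3])
        · rintro ⟨⟨hv1, hv2⟩, hv3⟩; exact ⟨⟨hv1, by omega⟩, hv3⟩
      rw [hbc, hitems]
      exact ih (by omega) j hj1 hjt

end RunLemmas
section CountLemmas

variable {n : ℕ} {c : ℕ → ℕ} (R : BaPRun n c)

/-- abbreviation for the number of bins of color g after step t -/
def cnt (t g : ℕ) : ℕ := R.binsOfColor t g

lemma cnt_def (t g : ℕ) :
    cnt R t g = ((Finset.Icc 1 (R.nbins t)).filter fun j => R.bcolor t j = g).card := rfl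

/-- facts available in the "place" branch -/
structure PlaceStep (t : ℕ) : Prop where
  ha1 : 1 ≤ R.assign t
  ha2 : R.assign t ≤ R.nbins (t-1)
  hnb : R.nbins t = R.nbins (t-1)
  hne : R.bcolor (t-1) (R.assign t) ≠ c t
  hmax : ∀ g, g ≠ c t → cnt R (t-1) g ≤ cnt R (t-1) (R.bcolor (t-1) (R.assign t))

/-- facts available in the "open" branch -/
structure OpenStep (t : ℕ) : Prop where
  ha : R.assign t = R.nbins (t-1) + 1
  hnb : R.nbins t = R.nbins (t-1) + 1
  hall : ∀ j, 1 ≤ j → j ≤ R.nbins (t-1) → R.bcolor (t-1) j = c t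

lemma run_step_cases {t : ℕ} (h1 : 1 ≤ t) (h2 : t ≤ n) :
    OpenStep R t ∨ PlaceStep R t := by
  rcases R.step t h1 h2 with ⟨ha, hn, hall⟩ | ⟨ha1, ha2, hn, hne, hmax⟩
  · exact Or.inl ⟨ha, hn, hall⟩
  · exact Or.inr ⟨ha1, ha2, hn, hne, fun g hg => hmax g hg⟩

variable {R}

lemma bcolor_eq_of_place {t : ℕ} (h1 : 1 ≤ t) (h2 : t ≤ n) (j : ℕ) :
    R.bcolor t j = if j = R.assign t then c t else R.bcolor (t-1) j :=
  R.bcolor_step t h1 h2 j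

section PlaceCnt

private lemma filter_eq_place {t : ℕ} (h1 : 1 ≤ t) (h2 : t ≤ n) (hp : PlaceStep R t) (g : ℕ) :
    (Finset.Icc 1 (R.nbins t)).filter (fun j => R.bcolor t j = g)
      = if g = c t then
          insert (R.assign t) ((Finset.Icc 1 (R.nbins (t-1))).filter
            (fun j => R.bcolor (t-1) j = g))
        else ((Finset.Icc 1 (R.nbins (t-1))).filter
            (fun j => R.bcolor (t-1) j = g)).erase (R.assign t) := by
  rw [hp.hnb]
  ext j
  by_cases hg : g = c t <;>
    simp only [hg, if_pos, if_neg, Finset.mem_insert, Finset.mem_filter, Finset.mem_erase,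
      Finset.mem_Icc, bcolor_eq_of_place h1 h2 j, hg] <;>
    by_cases hja : j = R.assign t <;>
    simp [hja, hp.ha1, hp.ha2, hp.hne] <;> tauto

lemma cnt_place_new {t : ℕ} (h1 : 1 ≤ t) (h2 : t ≤ n) (hp : PlaceStep R t) :
    cnt R t (c t) = cnt R (t-1) (c t) + 1 := by
  rw [cnt_def, filter_eq_place h1 h2 hp (c t), if_pos rfl, Finset.card_insert_of_notMem, cnt_def]
  simp only [Finset.mem_filter, Finset.mem_Icc, not_and]
  intro _
  exact hp.hne

lemma cnt_place_other {t : ℕ} (h1 : 1 ≤ t) (h2 : t ≤ n) (hp : PlaceStep R t)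
    {g : ℕ} (hg1 : g ≠ c t) (hg2 : g ≠ R.bcolor (t-1) (R.assign t)) :
    cnt R t g = cnt R (t-1) g := by
  rw [cnt_def, filter_eq_place h1 h2 hp g, if_neg hg1, Finset.card_erase_eq_ite, cnt_def]
  rw [if_neg]
  simp only [Finset.mem_filter, Finset.mem_Icc]
  rintro ⟨-, hc⟩
  exact hg2 hc.symm

lemma cnt_place_old {t : ℕ} (h1 : 1 ≤ t) (h2 : t ≤ n) (hp : PlaceStep R t) :
    cnt R t (R.bcolor (t-1) (R.assign t)) + 1 = cnt R (t-1) (R.bcolor (t-1) (R.assign t)) := by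
  have hmem : R.assign t ∈ (Finset.Icc 1 (R.nbins (t-1))).filter
      (fun j => R.bcolor (t-1) j = R.bcolor (t-1) (R.assign t)) := by
    simp [Finset.mem_filter, Finset.mem_Icc, hp.ha1, hp.ha2]
  have hpos : 0 < cnt R (t-1) (R.bcolor (t-1) (R.assign t)) :=
    Finset.card_pos.2 ⟨_, hmem⟩
  rw [cnt_def, filter_eq_place h1 h2 hp _, if_neg hp.hne, Finset.card_erase_of_mem hmem]
  rw [cnt_def] at hpos ⊢
  omega

end PlaceCnt

section OpenCnt

lemma cnt_open_new {t : ℕ} (h1 : 1 ≤ t) (h2 : t ≤ n) (ho : OpenStep R t) :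
    cnt R t (c t) = R.nbins (t-1) + 1 := by
  rw [cnt_def, ho.hnb]
  rw [Finset.filter_true_of_mem, Nat.card_Icc]
  · omega
  · intro j hj
    rw [Finset.mem_Icc] at hj
    rw [bcolor_eq_of_place h1 h2 j]
    by_cases hja : j = R.assign t
    · simp [hja]
    · rw [if_neg hja]
      exact ho.hall j hj.1 (by have := ho.ha; omega)

lemma cnt_open_other {t : ℕ} (h1 : 1 ≤ t) (h2 : t ≤ n) (ho : OpenStep R t)
    {g : ℕ} (hg : g ≠ c t) : cnt R t g = 0 := by
  rw [cnt_def, Finset.card_eq_zero, Finset.filter_eq_empty_iff]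
  intro j hj
  rw [Finset.mem_Icc] at hj
  rw [bcolor_eq_of_place h1 h2 j]
  by_cases hja : j = R.assign t
  · simp [hja]; exact fun h => hg h.symm
  · rw [if_neg hja]
    rw [ho.hnb] at hj
    have := ho.ha
    have : R.bcolor (t-1) j = c t := ho.hall j hj.1 (by omega)
    rw [this]
    exact fun h => hg h.symm

end OpenCnt

/-- a color never seen so far has no bins -/
lemma cnt_fresh {t g : ℕ} (htn : t ≤ n) (h : ∀ u, 1 ≤ u → u ≤ t → c u ≠ g) :
    cnt R t g = 0 := by
  rw [cnt_def, Finset.card_eq_zero, Finset.filter_eq_empty_iff]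
  intro j hj
  rw [Finset.mem_Icc] at hj
  obtain ⟨u, hu, -, hcu⟩ := run_last_color R t htn j hj.1 hj.2
  simp only [binItems, Finset.mem_filter, Finset.mem_Icc] at hu
  rw [hcu]
  exact h u hu.1.1 hu.1.2

/-- if some existing bin has a color different from `c t`, the step is a place step -/
lemma place_of_other {t g : ℕ} (h1 : 1 ≤ t) (h2 : t ≤ n) (hg : g ≠ c t)
    (hpos : 0 < cnt R (t-1) g) : PlaceStep R t := by
  rcases run_step_cases R h1 h2 with ho | hp
  · exfalso
    rw [cnt_def, Finset.card_pos] at hpos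
    obtain ⟨j, hj⟩ := hpos
    simp only [Finset.mem_filter, Finset.mem_Icc] at hj
    exact hg (hj.2 ▸ (ho.hall j hj.1.1 hj.1.2) ▸ rfl)
  · exact hp

/-- if `g0` strictly dominates every other allowed class, the item goes to a `g0` bin -/
lemma forced_class {t g0 : ℕ} (hp : PlaceStep R t) (hg0 : g0 ≠ c t)
    (hdom : ∀ g, g ≠ c t → g ≠ g0 → cnt R (t-1) g < cnt R (t-1) g0) :
    R.bcolor (t-1) (R.assign t) = g0 := by
  by_contra hne
  have h1 := hp.hmax g0 hg0
  have h2 := hdom _ hp.hne hne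
  omega

end CountLemmas
section Instance

/-- `Mv N = 4^(N+1)`, the value of OPT -/
def Mv (N : ℕ) : ℕ := 4^(N+1)

/-- `ee N i = 3^(i-1)·4^(N+1-i)`, the number of new pseudo-bins opened in phase `i` -/
def ee (N i : ℕ) : ℕ := 3^(i-1) * 4^(N+1-i)

/-- number of red items in phase `i` -/
def rr (N i : ℕ) : ℕ := Mv N - 2 * ee N i

/-- number of pseudo-bins after phase `i` -/
def nsq (N i : ℕ) : ℕ := 2 * Mv N - 3^i * 4^(N+1-i)

/-- end of the zero-size part -/
def T0 (N : ℕ) : ℕ := Mv N * (2*(N+1)+1)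

/-- final number of pseudo-bins -/
def Pv (N : ℕ) : ℕ := 2 * Mv N - 3^(N+1)

/-- end of the first small-item block -/
def TA (N : ℕ) : ℕ := T0 N + (Pv N - 1)

/-- end of the black block -/
def TB (N : ℕ) : ℕ := TA N + (Mv N - 1)

/-- total number of items -/
def nv (N : ℕ) : ℕ := TB N + (Mv N - 2)

/-- the color sequence -/
def cc (N t : ℕ) : ℕ :=
  if t ≤ T0 N then
    (if ((t-1) / Mv N) % 2 = 0 then 0
     else if (t-1) % Mv N < rr N (((t-1) / Mv N + 1)/2) then 1 else 2)
  else if t ≤ TA N then t + 4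
  else if t ≤ TB N then 3
  else t + 4

/-- the size sequence -/
noncomputable def ss (N : ℕ) (ε : ℝ) (t : ℕ) : ℝ :=
  if t ≤ T0 N then 0 else if t ≤ TA N then 2*ε else if t ≤ TB N then 1 - ε else 2*ε

section Arith

variable {N : ℕ}

lemma M_pos : 0 < Mv N := Nat.pow_pos (by norm_num)

lemma M_ge (hN : 2 ≤ N) : 64 ≤ Mv N := by
  unfold Mv
  calc (64:ℕ) = 4^3 := by norm_num
  _ ≤ 4^(N+1) := Nat.pow_le_pow_right (by norm_num) (by omega)

lemma ee_pos {i : ℕ} (hi2 : i ≤ N+1) : 1 ≤ ee N i :=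
  Nat.mul_pos (Nat.pow_pos (by norm_num)) (Nat.pow_pos (by norm_num))

lemma ee4_le {i : ℕ} (hi1 : 1 ≤ i) (hi2 : i ≤ N+1) : 4 * ee N i ≤ Mv N := by
  unfold ee Mv
  have h1 : 4 * (3^(i-1) * 4^(N+1-i)) = 3^(i-1) * 4^(N+2-i) := by
    rw [show N+2-i = (N+1-i)+1 by omega, pow_succ]; ring
  rw [h1]
  calc 3^(i-1) * 4^(N+2-i) ≤ 4^(i-1) * 4^(N+2-i) :=
        Nat.mul_le_mul_right _ (Nat.pow_le_pow_left (by norm_num) _)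
  _ = 4^(N+1) := by rw [← pow_add]; congr 1; omega

lemma pow3_lt {k : ℕ} (hk : 3 ≤ k) : 2 * 3^k + 8 ≤ 4^k := by
  induction k with
  | zero => omega
  | succ k ih =>
    rcases Nat.lt_or_ge k 3 with h | h
    · interval_cases k <;> simp_all <;> norm_num
    · have := ih (by omega)
      have h3 : 0 < 3^k := Nat.pow_pos (by norm_num)
      calc 2 * 3^(k+1) + 8 = 3*(2*3^k) + 8 := by ring
      _ ≤ 4 * (2*3^k + 8) := by omega
      _ ≤ 4 * 4^k := by omega
      _ = 4^(k+1) := by ring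

lemma P_ge (hN : 2 ≤ N) : Mv N + 8 ≤ Pv N := by
  unfold Pv Mv
  have h := pow3_lt (k := N+1) (by omega)
  have h2 : 2 * 3^(N+1) + 8 ≤ 4^(N+1) := h
  omega

lemma pow3_le_M (hN : 2 ≤ N) : 3^(N+1) + 8 ≤ Mv N := by
  have := P_ge hN; unfold Pv Mv at *
  have h3 : 0 < 3^(N+1) := Nat.pow_pos (by norm_num)
  omega

lemma nsq_zero : nsq N 0 = Mv N := by unfold nsq Mv; simp; omega

lemma nsq_prev {i : ℕ} (hi1 : 1 ≤ i) (hi2 : i ≤ N+1) :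
    nsq N (i-1) = 2 * Mv N - 4 * ee N i := by
  unfold nsq ee
  congr 1
  rw [show N+1-(i-1) = (N+1-i)+1 by omega, pow_succ]
  ring

lemma nsq_step {i : ℕ} (hi1 : 1 ≤ i) (hi2 : i ≤ N+1) :
    nsq N i = nsq N (i-1) + ee N i := by
  have h1 : (3:ℕ)^i * 4^(N+1-i) = 3 * ee N i := by
    unfold ee
    have hi : (3:ℕ)^i = 3 * 3^(i-1) := by
      calc (3:ℕ)^i = 3^(i-1+1) := by rw [show i-1+1 = i by omega]
      _ = 3 * 3^(i-1) := pow_succ' 3 _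
    rw [hi]; ring
  have h2 := ee4_le hi1 hi2
  have h3 : nsq N i = 2 * Mv N - 3 * ee N i := by unfold nsq; rw [h1]
  rw [h3, nsq_prev hi1 hi2]
  have h4 : Mv N ≤ 2 * Mv N := by omega
  omega

lemma nsq_le {i : ℕ} (hi2 : i ≤ N+1) : nsq N i ≤ 2 * Mv N := by unfold nsq; omega

lemma nsq_ge {i : ℕ} (hi2 : i ≤ N+1) : Mv N ≤ nsq N i := by
  unfold nsq Mv
  have : 3^i * 4^(N+1-i) ≤ 4^i * 4^(N+1-i) :=
    Nat.mul_le_mul_right _ (Nat.pow_le_pow_left (by norm_num) _)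
  rw [← pow_add] at this
  have h2 : i + (N+1-i) = N+1 := by omega
  rw [h2] at this
  omega

lemma nsq_last : nsq N (N+1) = Pv N := by unfold nsq Pv; simp

lemma rr_eq {i : ℕ} (hi1 : 1 ≤ i) (hi2 : i ≤ N+1) : 2 * rr N i = nsq N (i-1) := by
  rw [nsq_prev hi1 hi2]; unfold rr
  have := ee4_le hi1 hi2
  omega

end Arith

section Eval

variable {N : ℕ}

lemma T0_eq : T0 N = Mv N + 2 * Mv N * (N+1) := by unfold T0; ring

lemma cc_phase0 {t : ℕ} (h1 : 1 ≤ t) (h2 : t ≤ Mv N) : cc N t = 0 := by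
  have hM : 0 < Mv N := M_pos
  have hT0 : t ≤ T0 N := by unfold T0; nlinarith
  unfold cc
  rw [if_pos hT0, if_pos]
  rw [Nat.div_eq_of_lt (by omega)]

lemma base_le {i : ℕ} (hi1 : 1 ≤ i) (hi2 : i ≤ N+1) {q : ℕ} (hq : q ≤ 2 * Mv N) :
    Mv N + 2 * Mv N * (i-1) + q ≤ T0 N := by
  rw [T0_eq]
  have : 2 * Mv N * (i-1) + 2* Mv N ≤ 2 * Mv N * (N+1) := by
    have : 2 * Mv N * (i-1) + 2 * Mv N = 2 * Mv N * (i-1+1) := by ring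
    rw [this]
    exact Nat.mul_le_mul_left _ (by omega)
  omega

lemma divmod_helper {k q : ℕ} (hq : q < Mv N) : (Mv N * k + q) / Mv N = k ∧ (Mv N * k + q) % Mv N = q := by
  have hM : 0 < Mv N := M_pos
  constructor
  · rw [Nat.mul_add_div hM, Nat.div_eq_of_lt hq]
    omega
  · rw [Nat.mul_add_mod, Nat.mod_eq_of_lt hq]

lemma cc_red {i p : ℕ} (hi1 : 1 ≤ i) (hi2 : i ≤ N+1) (hp1 : 1 ≤ p) (hp2 : p ≤ rr N i) :
    cc N (Mv N + 2 * Mv N * (i-1) + p) = 1 := by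
  have hM : 0 < Mv N := M_pos
  have hrM : rr N i ≤ Mv N := by unfold rr; omega
  set t := Mv N + 2 * Mv N * (i-1) + p with ht
  have hT0 : t ≤ T0 N := base_le hi1 hi2 (by omega)
  have ht1 : t - 1 = Mv N * (2*i-1) + (p-1) := by
    have : Mv N * (2*i-1) = Mv N + 2*Mv N *(i-1) := by
      have h2 : 2*i-1 = 1 + 2*(i-1) := by omega
      rw [h2]; ring
    omega
  obtain ⟨hdiv, hmod⟩ := divmod_helper (k := 2*i-1) (q := p-1) (N := N) (by omega)
  unfold cc
  rw [if_pos hT0, ht1, hdiv, hmod]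
  rw [if_neg (by omega)]
  rw [if_pos]
  have : (2*i-1+1)/2 = i := by omega
  rw [this]
  omega

lemma cc_blue {i p : ℕ} (hi1 : 1 ≤ i) (hi2 : i ≤ N+1) (hp1 : rr N i < p) (hp2 : p ≤ Mv N) :
    cc N (Mv N + 2 * Mv N * (i-1) + p) = 2 := by
  have hM : 0 < Mv N := M_pos
  set t := Mv N + 2 * Mv N * (i-1) + p with ht
  have hT0 : t ≤ T0 N := base_le hi1 hi2 (by omega)
  have ht1 : t - 1 = Mv N * (2*i-1) + (p-1) := by
    have : Mv N * (2*i-1) = Mv N + 2*Mv N *(i-1) := by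
      have h2 : 2*i-1 = 1 + 2*(i-1) := by omega
      rw [h2]; ring
    omega
  obtain ⟨hdiv, hmod⟩ := divmod_helper (k := 2*i-1) (q := p-1) (N := N) (by omega)
  unfold cc
  rw [if_pos hT0, ht1, hdiv, hmod]
  rw [if_neg (by omega)]
  rw [if_neg]
  have : (2*i-1+1)/2 = i := by omega
  rw [this]
  omega

lemma cc_white2 {i p : ℕ} (hi1 : 1 ≤ i) (hi2 : i ≤ N+1) (hp1 : 1 ≤ p) (hp2 : p ≤ Mv N) :
    cc N (Mv N + 2 * Mv N * (i-1) + Mv N + p) = 0 := by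
  have hM : 0 < Mv N := M_pos
  set t := Mv N + 2 * Mv N * (i-1) + Mv N + p with ht
  have hT0 : t ≤ T0 N := by
    have := base_le (N := N) hi1 hi2 (q := Mv N + p) (by omega)
    omega
  have ht1 : t - 1 = Mv N * (2*i) + (p-1) := by
    have : Mv N * (2*i) = Mv N + 2*Mv N *(i-1) + Mv N := by
      have h2 : 2*i = 2 + 2*(i-1) := by omega
      rw [h2]; ring
    omega
  obtain ⟨hdiv, hmod⟩ := divmod_helper (k := 2*i) (q := p-1) (N := N) (by omega)
  unfold cc
  rw [if_pos hT0, ht1, hdiv, hmod]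
  rw [if_pos (by omega)]

lemma cc_A {t : ℕ} (h1 : T0 N < t) (h2 : t ≤ TA N) : cc N t = t + 4 := by
  unfold cc; rw [if_neg (by omega), if_pos h2]

lemma cc_B {t : ℕ} (h1 : TA N < t) (h2 : t ≤ TB N) : cc N t = 3 := by
  have : T0 N ≤ TA N := by unfold TA; omega
  unfold cc; rw [if_neg (by omega), if_neg (by omega), if_pos h2]

lemma cc_C {t : ℕ} (h1 : TB N < t) : cc N t = t + 4 := by
  have h2 : T0 N ≤ TA N := by unfold TA; omega
  have h3 : TA N ≤ TB N := by unfold TB; omega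
  unfold cc; rw [if_neg (by omega), if_neg (by omega), if_neg (by omega)]

lemma cc_le2 {t : ℕ} (h : t ≤ T0 N) : cc N t ≤ 2 := by
  unfold cc
  rw [if_pos h]
  split_ifs <;> omega

lemma cc_le2_iff {t : ℕ} : cc N t ≤ 2 ↔ t ≤ T0 N := by
  constructor
  · intro h
    by_contra h'
    push_neg at h'
    unfold cc at h
    rw [if_neg (by omega)] at h
    split_ifs at h <;> omega
  · exact cc_le2

lemma cc_eq3_iff {t : ℕ} : cc N t = 3 ↔ (TA N < t ∧ t ≤ TB N) := by
  constructor
  · intro h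
    by_contra h'
    rcases Nat.lt_or_ge (T0 N) t with hc | hc
    · rcases Nat.lt_or_ge (TA N) t with hc2 | hc2
      · rcases Nat.lt_or_ge (TB N) t with hc3 | hc3
        · rw [cc_C hc3] at h; omega
        · exact h' ⟨hc2, hc3⟩
      · rw [cc_A hc hc2] at h; omega
    · have := cc_le2 (N := N) hc; omega
  · rintro ⟨h1, h2⟩; exact cc_B h1 h2

lemma cc_ge4_iff {t : ℕ} : 4 ≤ cc N t ↔ ((T0 N < t ∧ t ≤ TA N) ∨ TB N < t) := by
  constructor
  · intro h
    rcases Nat.lt_or_ge (T0 N) t with hc | hc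
    · rcases Nat.lt_or_ge (TA N) t with hc2 | hc2
      · rcases Nat.lt_or_ge (TB N) t with hc3 | hc3
        · exact Or.inr hc3
        · rw [cc_B hc2 hc3] at h; omega
      · exact Or.inl ⟨hc, hc2⟩
    · have := cc_le2 (N := N) hc; omega
  · rintro (⟨h1, h2⟩ | h1)
    · rw [cc_A h1 h2]; omega
    · rw [cc_C h1]; omega

variable {ε : ℝ}

lemma ss_zero {t : ℕ} (h : t ≤ T0 N) : ss N ε t = 0 := by unfold ss; rw [if_pos h]

lemma ss_A {t : ℕ} (h1 : T0 N < t) (h2 : t ≤ TA N) : ss N ε t = 2*ε := by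
  unfold ss; rw [if_neg (by omega), if_pos h2]

lemma ss_B {t : ℕ} (h1 : TA N < t) (h2 : t ≤ TB N) : ss N ε t = 1 - ε := by
  have : T0 N ≤ TA N := by unfold TA; omega
  unfold ss; rw [if_neg (by omega), if_neg (by omega), if_pos h2]

lemma ss_C {t : ℕ} (h1 : TB N < t) : ss N ε t = 2*ε := by
  have h2 : T0 N ≤ TA N := by unfold TA; omega
  have h3 : TA N ≤ TB N := by unfold TB; omega
  unfold ss; rw [if_neg (by omega), if_neg (by omega), if_neg (by omega)]

lemma ss_of_c3 {t : ℕ} (h : cc N t = 3) : ss N ε t = 1 - ε := by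
  rw [cc_eq3_iff] at h; exact ss_B h.1 h.2

lemma ss_of_cge4 {t : ℕ} (h : 4 ≤ cc N t) : ss N ε t = 2*ε := by
  rw [cc_ge4_iff] at h
  rcases h with ⟨h1, h2⟩ | h1
  · exact ss_A h1 h2
  · exact ss_C h1

end Eval

end Instance
section Blocks

variable {N : ℕ} {R : BaPRun (nv N) (cc N)}

/-- the bin an item is placed into has a color class of positive count -/
lemma place_G_pos {t : ℕ} (hp : PlaceStep R t) :
    0 < cnt R (t-1) (R.bcolor (t-1) (R.assign t)) := by
  rw [cnt_def, Finset.card_pos]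
  exact ⟨R.assign t, by simp [Finset.mem_filter, Finset.mem_Icc, hp.ha1, hp.ha2]⟩

/-- state in which all `k` pseudo-bins are white -/
def ZS (R : BaPRun (nv N) (cc N)) (u k : ℕ) : Prop :=
  R.nbins u = k ∧ cnt R u 0 = k ∧ ∀ g, g ≠ 0 → cnt R u g = 0

/-- a block of white items arriving on an all-white state opens new bins -/
lemma open_block {u k L : ℕ} (hZ : ZS R u k)
    (hcol : ∀ j, 1 ≤ j → j ≤ L → cc N (u + j) = 0)
    (hun : u + L ≤ nv N) : ZS R (u+L) (k+L) := by
  induction L with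
  | zero => simpa using hZ
  | succ L ih =>
    obtain ⟨h1, h2, h3⟩ := ih (fun j hj1 hj2 => hcol j hj1 (by omega)) (by omega)
    have ht1 : 1 ≤ u + (L+1) := by omega
    have ht2 : u + (L+1) ≤ nv N := by omega
    have htm : u + (L+1) - 1 = u + L := by omega
    have hct : cc N (u + (L+1)) = 0 := hcol (L+1) (by omega) (by omega)
    have hopen : OpenStep R (u+(L+1)) := by
      rcases run_step_cases R ht1 ht2 with ho | hp
      · exact ho
      · exfalso
        have hmem := place_G_pos hp
        have hne := hp.hne
        rw [htm] at hmem hne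
        have hG0 : R.bcolor (u+L) (R.assign (u+(L+1))) = 0 := by
          by_contra hg
          rw [h3 _ hg] at hmem
          omega
        exact hne (by rw [hG0, hct])
    have hnb' := hopen.hnb
    have e1 := cnt_open_new ht1 ht2 hopen
    rw [htm] at hnb' e1
    rw [hct] at e1
    refine ⟨by omega, by rw [e1, h1]; omega, ?_⟩
    intro g hg
    exact cnt_open_other ht1 ht2 hopen (g := g) (by rw [hct]; exact hg)

/-- a block of red items arriving on an all-white state recolors white bins -/
lemma red_block {u k L : ℕ} (hZ : ZS R u k) (hL : L ≤ k)
    (hcol : ∀ j, 1 ≤ j → j ≤ L → cc N (u + j) = 1)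
    (hun : u + L ≤ nv N) :
    R.nbins (u+L) = k ∧ cnt R (u+L) 0 = k - L ∧ cnt R (u+L) 1 = L ∧
      ∀ g, g ≠ 0 → g ≠ 1 → cnt R (u+L) g = 0 := by
  induction L with
  | zero =>
    obtain ⟨h1, h2, h3⟩ := hZ
    exact ⟨h1, by simpa using h2, by simpa using h3 1 one_ne_zero,
      fun g hg _ => by simpa using h3 g hg⟩
  | succ L ih =>
    obtain ⟨h1, h2, h3, h4⟩ := ih (by omega) (fun j hj1 hj2 => hcol j hj1 (by omega)) (by omega)
    have ht1 : 1 ≤ u + (L+1) := by omega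
    have ht2 : u + (L+1) ≤ nv N := by omega
    have htm : u + (L+1) - 1 = u + L := by omega
    have hct : cc N (u+(L+1)) = 1 := hcol (L+1) (by omega) (by omega)
    have hpos : 0 < cnt R (u+(L+1)-1) 0 := by rw [htm, h2]; omega
    have hp : PlaceStep R (u+(L+1)) := place_of_other ht1 ht2 (by rw [hct]; omega) hpos
    have hG : R.bcolor (u+(L+1)-1) (R.assign (u+(L+1))) = 0 := by
      apply forced_class hp (by rw [hct]; omega)
      intro g hg1 hg2
      rw [hct] at hg1
      rw [htm, h4 g hg2 hg1, h2]
      omega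
    have eNew := cnt_place_new ht1 ht2 hp
    have eOld := cnt_place_old ht1 ht2 hp
    have hnb' := hp.hnb
    rw [htm] at eNew eOld hnb' hG
    rw [hG] at eOld
    rw [hct] at eNew
    refine ⟨by omega, by omega, by omega, ?_⟩
    intro g hg0 hg1
    have := cnt_place_other ht1 ht2 hp (g := g) (by rw [hct]; exact hg1)
      (by rw [htm, hG]; exact hg0)
    rw [htm] at this
    rw [this]
    exact h4 g hg0 hg1

/-- a block of blue items arriving on a balanced white/red state -/
lemma blue_block {u k h L : ℕ}
    (hS : R.nbins u = k ∧ cnt R u 0 = h ∧ cnt R u 1 = h ∧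
      ∀ g, g ≠ 0 → g ≠ 1 → cnt R u g = 0)
    (hL : L ≤ 2*h)
    (hcol : ∀ j, 1 ≤ j → j ≤ L → cc N (u + j) = 2)
    (hun : u + L ≤ nv N) :
    R.nbins (u+L) = k ∧ cnt R (u+L) 0 + cnt R (u+L) 1 = 2*h - L ∧
      cnt R (u+L) 0 ≤ cnt R (u+L) 1 + 1 ∧ cnt R (u+L) 1 ≤ cnt R (u+L) 0 + 1 ∧
      cnt R (u+L) 2 = L ∧
      ∀ g, g ≠ 0 → g ≠ 1 → g ≠ 2 → cnt R (u+L) g = 0 := by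
  induction L with
  | zero =>
    obtain ⟨h1, h2, h3, h4⟩ := hS
    refine ⟨h1, by simp [h2, h3]; omega, by simp [h2, h3], by simp [h2, h3],
      by simpa using h4 2 (by omega) (by omega), fun g hg0 hg1 _ => by simpa using h4 g hg0 hg1⟩
  | succ L ih =>
    obtain ⟨h1, h2, h3, h4, h5, h6⟩ :=
      ih (by omega) (fun j hj1 hj2 => hcol j hj1 (by omega)) (by omega)
    have ht1 : 1 ≤ u + (L+1) := by omega
    have ht2 : u + (L+1) ≤ nv N := by omega
    have htm : u + (L+1) - 1 = u + L := by omega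
    have hct : cc N (u+(L+1)) = 2 := hcol (L+1) (by omega) (by omega)
    have hp : PlaceStep R (u+(L+1)) := by
      rcases (show 0 < cnt R (u+L) 0 ∨ 0 < cnt R (u+L) 1 by omega) with hpos | hpos
      · exact place_of_other ht1 ht2 (g := 0) (by rw [hct]; omega) (by rw [htm]; exact hpos)
      · exact place_of_other ht1 ht2 (g := 1) (by rw [hct]; omega) (by rw [htm]; exact hpos)
    have hGpos := place_G_pos hp
    have hne := hp.hne
    have hmax0 := hp.hmax 0 (by rw [hct]; omega)
    have hmax1 := hp.hmax 1 (by rw [hct]; omega)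
    have eNew := cnt_place_new ht1 ht2 hp
    have eOld := cnt_place_old ht1 ht2 hp
    have hnb' := hp.hnb
    rw [htm] at hGpos hne hmax0 hmax1 eNew eOld hnb'
    rw [hct] at eNew
    have hG01 : R.bcolor (u+L) (R.assign (u+(L+1))) = 0 ∨
        R.bcolor (u+L) (R.assign (u+(L+1))) = 1 := by
      by_contra hg
      push_neg at hg
      rw [h6 _ hg.1 hg.2 (by rw [← hct]; exact hne)] at hGpos
      omega
    have hother : ∀ g, g ≠ 0 → g ≠ 1 → g ≠ 2 → cnt R (u+(L+1)) g = 0 := by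
      intro g hg0 hg1 hg2
      have := cnt_place_other ht1 ht2 hp (g := g) (by rw [hct]; exact hg2)
        (by rw [htm]; rcases hG01 with hG | hG <;> rw [hG] <;> assumption)
      rw [htm] at this
      rw [this]
      exact h6 g hg0 hg1 hg2
    rcases hG01 with hG | hG
    · rw [hG] at eOld
      have eo : cnt R (u+(L+1)) 1 = cnt R (u+L) 1 := by
        have := cnt_place_other ht1 ht2 hp (g := 1) (by rw [hct]; omega)
          (by rw [htm, hG]; omega)
        rw [htm] at this; exact this
      rw [hG] at hmax0 hmax1
      exact ⟨by omega, by omega, by omega, by omega, by omega, hother⟩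
    · rw [hG] at eOld
      have eo : cnt R (u+(L+1)) 0 = cnt R (u+L) 0 := by
        have := cnt_place_other ht1 ht2 hp (g := 0) (by rw [hct]; omega)
          (by rw [htm, hG]; omega)
        rw [htm] at this; exact this
      rw [hG] at hmax0 hmax1
      exact ⟨by omega, by omega, by omega, by omega, by omega, hother⟩

/-- a block of white items recoloring all non-white bins white -/
lemma recolor_block {u k w L : ℕ}
    (hS : R.nbins u = k ∧ cnt R u 0 = w ∧ cnt R u 1 + cnt R u 2 = L ∧ w + L = k ∧
      ∀ g, g ≠ 0 → g ≠ 1 → g ≠ 2 → cnt R u g = 0)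
    (hcol : ∀ j, 1 ≤ j → j ≤ L → cc N (u + j) = 0)
    (hun : u + L ≤ nv N) : ZS R (u+L) k := by
  obtain ⟨h1, h2, h3, h4, h5⟩ := hS
  suffices hkey : ∀ j, j ≤ L → R.nbins (u+j) = k ∧ cnt R (u+j) 0 = w + j ∧
      cnt R (u+j) 1 + cnt R (u+j) 2 = L - j ∧
      (∀ g, g ≠ 0 → g ≠ 1 → g ≠ 2 → cnt R (u+j) g = 0) by
    obtain ⟨g1, g2, g3, g4⟩ := hkey L le_rfl
    refine ⟨g1, by omega, ?_⟩
    intro g hg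
    rcases eq_or_ne g 1 with rfl | hg1
    · omega
    rcases eq_or_ne g 2 with rfl | hg2
    · omega
    exact g4 g hg hg1 hg2
  intro j
  induction j with
  | zero => exact fun _ => ⟨h1, by simpa using h2, by simpa using h3, fun g a b c => by
      simpa using h5 g a b c⟩
  | succ j ih =>
    intro hjL
    obtain ⟨g1, g2, g3, g4⟩ := ih (by omega)
    have ht1 : 1 ≤ u + (j+1) := by omega
    have ht2 : u + (j+1) ≤ nv N := by omega
    have htm : u + (j+1) - 1 = u + j := by omega
    have hct : cc N (u+(j+1)) = 0 := hcol (j+1) (by omega) (by omega)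
    have hp : PlaceStep R (u+(j+1)) := by
      rcases (show 0 < cnt R (u+j) 1 ∨ 0 < cnt R (u+j) 2 by omega) with hpos | hpos
      · exact place_of_other ht1 ht2 (g := 1) (by rw [hct]; omega) (by rw [htm]; exact hpos)
      · exact place_of_other ht1 ht2 (g := 2) (by rw [hct]; omega) (by rw [htm]; exact hpos)
    have hGpos := place_G_pos hp
    have hne := hp.hne
    have eNew := cnt_place_new ht1 ht2 hp
    have eOld := cnt_place_old ht1 ht2 hp
    have hnb' := hp.hnb
    rw [htm] at hGpos hne eNew eOld hnb'
    rw [hct] at eNew hne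
    have hG12 : R.bcolor (u+j) (R.assign (u+(j+1))) = 1 ∨
        R.bcolor (u+j) (R.assign (u+(j+1))) = 2 := by
      by_contra hg
      push_neg at hg
      rw [g4 _ hne hg.1 hg.2] at hGpos
      omega
    have hother : ∀ g, g ≠ 0 → g ≠ 1 → g ≠ 2 → cnt R (u+(j+1)) g = 0 := by
      intro g hg0 hg1 hg2
      have := cnt_place_other ht1 ht2 hp (g := g) (by rw [hct]; exact hg0)
        (by rw [htm]; rcases hG12 with hG | hG <;> rw [hG] <;> assumption)
      rw [htm] at this
      rw [this]
      exact g4 g hg0 hg1 hg2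
    rcases hG12 with hG | hG
    · rw [hG] at eOld
      have eo : cnt R (u+(j+1)) 2 = cnt R (u+j) 2 := by
        have := cnt_place_other ht1 ht2 hp (g := 2) (by rw [hct]; omega)
          (by rw [htm, hG]; omega)
        rw [htm] at this; exact this
      exact ⟨by omega, by omega, by omega, hother⟩
    · rw [hG] at eOld
      have eo : cnt R (u+(j+1)) 1 = cnt R (u+j) 1 := by
        have := cnt_place_other ht1 ht2 hp (g := 1) (by rw [hct]; omega)
          (by rw [htm, hG]; omega)
        rw [htm] at this; exact this
      exact ⟨by omega, by omega, by omega, hother⟩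

end Blocks
section ZeroMain

variable {N : ℕ} {R : BaPRun (nv N) (cc N)}

lemma T0_le_TA : T0 N ≤ TA N := by unfold TA; omega
lemma TA_le_TB : TA N ≤ TB N := by unfold TB; omega
lemma TB_le_nv : TB N ≤ nv N := by unfold nv; omega
lemma T0_le_nv : T0 N ≤ nv N := le_trans T0_le_TA (le_trans TA_le_TB TB_le_nv)

lemma ZS_zero : ZS R 0 0 := by
  refine ⟨R.nbins_zero, ?_, ?_⟩
  · rw [cnt_def, R.nbins_zero]; simp
  · intro g _; rw [cnt_def, R.nbins_zero]; simp

lemma phase_step (hN : 2 ≤ N) {i : ℕ} (hi1 : 1 ≤ i) (hi2 : i ≤ N+1)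
    (hZ : ZS R (Mv N + 2*Mv N*(i-1)) (nsq N (i-1))) :
    ZS R (Mv N + 2*Mv N*i) (nsq N i) := by
  set M := Mv N with hM
  set b := M + 2*M*(i-1) with hb
  set e := ee N i with he
  have he4 : 4*e ≤ M := ee4_le hi1 hi2
  have he1 : 1 ≤ e := ee_pos (by omega)
  have hr2 : 2 * rr N i = nsq N (i-1) := rr_eq hi1 hi2
  set r := rr N i with hrdef
  have hrr : r = M - 2*e := by rw [hrdef]; unfold rr; rw [← hM, ← he]
  have hMge : 64 ≤ M := M_ge hN
  have hbT0 : b + 2*M ≤ T0 N := by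
    rw [T0_eq, hb, ← hM]
    have : 2 * M * (i-1) + 2*M = 2*M*i := by
      have h2 : i - 1 + 1 = i := by omega
      calc 2*M*(i-1) + 2*M = 2*M*((i-1)+1) := by ring
      _ = 2*M*i := by rw [h2]
    have h3 : 2*M*i ≤ 2*M*(N+1) := Nat.mul_le_mul_left _ (by omega)
    omega
  have hbnv : b + 2*M ≤ nv N := le_trans hbT0 T0_le_nv
  -- red block
  have hred := red_block hZ (L := r) (by omega)
    (fun j hj1 hj2 => cc_red hi1 hi2 hj1 hj2) (by omega)
  -- blue block
  have hblue := blue_block (u := b + r) (h := r) (L := M - r) (k := nsq N (i-1))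
    ⟨hred.1, by have := hred.2.1; rw [this]; omega, hred.2.2.1, hred.2.2.2⟩
    (by omega)
    (fun j hj1 hj2 => by
      have : b + r + j = b + (r + j) := by omega
      rw [this]
      exact cc_blue hi1 hi2 (by omega) (by omega))
    (by omega)
  obtain ⟨B1, B2, B3, B4, B5, B6⟩ := hblue
  have hcnt01 : cnt R (b + r + (M - r)) 0 = r - e ∧ cnt R (b + r + (M - r)) 1 = r - e := by
    constructor <;> omega
  have hidx : b + r + (M - r) = b + M := by omega
  rw [hidx] at hcnt01 B1 B5 B6
  -- recolor block
  have hrec := recolor_block (u := b + M) (k := nsq N (i-1)) (w := r - e) (L := r + e)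
    ⟨B1, hcnt01.1, by rw [hcnt01.2, B5]; omega, by omega, B6⟩
    (fun j hj1 hj2 => by
      have : b + M + j = M + 2*M*(i-1) + M + j := by omega
      rw [this]
      exact cc_white2 hi1 hi2 hj1 (by omega))
    (by omega)
  -- open block
  have hopen := open_block (u := b + M + (r + e)) (k := nsq N (i-1)) (L := M - (r+e))
    hrec
    (fun j hj1 hj2 => by
      have : b + M + (r+e) + j = M + 2*M*(i-1) + M + (r + e + j) := by omega
      rw [this]
      exact cc_white2 hi1 hi2 (by omega) (by omega))
    (by omega)
  have hidx2 : b + M + (r + e) + (M - (r+e)) = M + 2*M*i := by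
    have : 2*M*(i-1) + 2*M = 2*M*i := by
      have h2 : i - 1 + 1 = i := by omega
      calc 2*M*(i-1) + 2*M = 2*M*((i-1)+1) := by ring
      _ = 2*M*i := by rw [h2]
    omega
  have hval : nsq N (i-1) + (M - (r+e)) = nsq N i := by
    rw [nsq_step hi1 hi2, ← hr2]
    omega
  rw [hidx2, hval] at hopen
  exact hopen

lemma zero_main (hN : 2 ≤ N) : ZS R (T0 N) (Pv N) := by
  have key : ∀ i, i ≤ N+1 → ZS R (Mv N + 2*Mv N*i) (nsq N i) := by
    intro i
    induction i with
    | zero =>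
      intro _
      have h0 := open_block (R := R) (u := 0) (k := 0) (L := Mv N) (ZS_zero (R := R))
        (fun j hj1 hj2 => by
          have : 0 + j = j := by omega
          rw [this]
          exact cc_phase0 hj1 hj2)
        (by have := T0_le_nv (N := N); unfold T0 at this; nlinarith [M_pos (N := N)])
      have : (0 : ℕ) + Mv N = Mv N + 2*Mv N*0 := by ring
      rw [this] at h0
      rw [nsq_zero]
      simpa using h0
    | succ i ih =>
      intro hi
      have hstep := phase_step hN (i := i+1) (by omega) (by omega) (by simpa using ih (by omega))
      simpa using hstep
  have := key (N+1) le_rfl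
  rw [nsq_last] at this
  have hT : Mv N + 2*Mv N*(N+1) = T0 N := by rw [T0_eq]
  rw [hT] at this
  exact this

end ZeroMain
section ABC

variable {N : ℕ} {R : BaPRun (nv N) (cc N)}

lemma cc_fresh_ne {u t : ℕ} (hu1 : 1 ≤ u) (hu : u < t) (ht4 : cc N t = t + 4) :
    cc N u ≠ cc N t := by
  rw [ht4]
  rcases le_or_gt u (T0 N) with h | h
  · have := cc_le2 (N := N) h; omega
  rcases le_or_gt u (TA N) with h2 | h2
  · rw [cc_A h h2]; omega
  rcases le_or_gt u (TB N) with h3 | h3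
  · rw [cc_B h2 h3]; omega
  · rw [cc_C h3]; omega

lemma cnt_fresh_at {t : ℕ} (h1 : 1 ≤ t) (h2 : t ≤ nv N) (h4 : cc N t = t + 4) :
    cnt R (t-1) (cc N t) = 0 :=
  cnt_fresh (by omega) (fun u hu1 hu2 => cc_fresh_ne hu1 (by omega) h4)

/-- if not all bins have color `g0` there is a nonempty class other than `g0` -/
lemma exists_other_class {t' g0 : ℕ} (h : cnt R t' g0 < R.nbins t') :
    ∃ g, g ≠ g0 ∧ 0 < cnt R t' g := by
  have hsub : (Finset.Icc 1 (R.nbins t')).filter (fun j => R.bcolor t' j = g0)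
      ⊆ Finset.Icc 1 (R.nbins t') := Finset.filter_subset _ _
  have hne : ∃ j ∈ Finset.Icc 1 (R.nbins t'),
      j ∉ (Finset.Icc 1 (R.nbins t')).filter (fun j => R.bcolor t' j = g0) := by
    by_contra hcon
    push_neg at hcon
    have hcc := Finset.card_le_card (fun j hj => hcon j hj)
    rw [cnt_def] at h
    rw [Nat.card_Icc] at hcc
    omega
  obtain ⟨j, hj1, hj2⟩ := hne
  refine ⟨R.bcolor t' j, ?_, ?_⟩
  · intro hcon
    exact hj2 (Finset.mem_filter.2 ⟨hj1, hcon⟩)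
  · rw [cnt_def, Finset.card_pos]
    exact ⟨j, Finset.mem_filter.2 ⟨hj1, rfl⟩⟩

/-- invariant during the A block -/
def AS (R : BaPRun (nv N) (cc N)) (k : ℕ) : Prop :=
  R.nbins (T0 N + k) = Pv N ∧ cnt R (T0 N + k) 0 = Pv N - k ∧
    (∀ g, g ≠ 0 → cnt R (T0 N + k) g ≤ 1) ∧
    cnt R (T0 N + k) 1 = 0 ∧ cnt R (T0 N + k) 2 = 0 ∧ cnt R (T0 N + k) 3 = 0

lemma A_inv (hN : 2 ≤ N) : ∀ k, k ≤ Pv N - 1 → AS R k := by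
  have hP := P_ge hN
  have hM := M_ge hN
  obtain ⟨z1, z2, z3⟩ := zero_main (R := R) hN
  intro k
  induction k with
  | zero =>
    intro _
    exact ⟨by simpa using z1, by simpa using z2, fun g hg => by simp [z3 g hg],
      by simpa using z3 1 (by omega), by simpa using z3 2 (by omega),
      by simpa using z3 3 (by omega)⟩
  | succ k ih =>
    intro hk
    obtain ⟨g1, g2, g3, g4, g5, g6⟩ := ih (by omega)
    have ht1 : 1 ≤ T0 N + (k+1) := by omega
    have ht2 : T0 N + (k+1) ≤ nv N := by
      have h' : T0 N + (k+1) ≤ TA N := by unfold TA; omega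
      have := TA_le_TB (N := N)
      have := TB_le_nv (N := N)
      omega
    have htm : T0 N + (k+1) - 1 = T0 N + k := by omega
    have hct : cc N (T0 N + (k+1)) = (T0 N + (k+1)) + 4 :=
      cc_A (by omega) (by unfold TA; omega)
    have hp : PlaceStep R (T0 N + (k+1)) :=
      place_of_other ht1 ht2 (g := 0) (by omega) (by rw [htm, g2]; omega)
    have hG : R.bcolor (T0 N + (k+1) - 1) (R.assign (T0 N + (k+1))) = 0 := by
      apply forced_class hp (by omega)
      intro g hg1 hg2
      rw [htm, g2]
      have := g3 g hg2
      omega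
    have hfresh : cnt R (T0 N + k) (cc N (T0 N + (k+1))) = 0 := by
      have := cnt_fresh_at (R := R) ht1 ht2 hct
      rw [htm] at this
      exact this
    have eNew := cnt_place_new ht1 ht2 hp
    have eOld := cnt_place_old ht1 ht2 hp
    have hnb' := hp.hnb
    rw [htm] at eNew eOld hnb' hG
    rw [hG] at eOld
    refine ⟨by omega, by omega, ?_, ?_, ?_, ?_⟩
    · intro g hg
      rcases eq_or_ne g (cc N (T0 N + (k+1))) with rfl | hgc
      · rw [eNew, hfresh]
      · have := cnt_place_other ht1 ht2 hp (g := g) hgc (by rw [htm, hG]; exact hg)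
        rw [htm] at this
        rw [this]
        exact g3 g hg
    all_goals {
      have hgc : (1:ℕ) ≠ cc N (T0 N + (k+1)) ∧ (2:ℕ) ≠ cc N (T0 N + (k+1)) ∧
          (3:ℕ) ≠ cc N (T0 N + (k+1)) := by omega
      first
      | (have := cnt_place_other ht1 ht2 hp (g := 1) hgc.1 (by rw [htm, hG]; omega)
         rw [htm] at this; rw [this]; exact g4)
      | (have := cnt_place_other ht1 ht2 hp (g := 2) hgc.2.1 (by rw [htm, hG]; omega)
         rw [htm] at this; rw [this]; exact g5)
      | (have := cnt_place_other ht1 ht2 hp (g := 3) hgc.2.2 (by rw [htm, hG]; omega)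
         rw [htm] at this; rw [this]; exact g6) }

/-- each A item is placed into a white pseudo-bin -/
lemma A_G (hN : 2 ≤ N) {k : ℕ} (hk1 : 1 ≤ k) (hk2 : k ≤ Pv N - 1) :
    PlaceStep R (T0 N + k) ∧
      R.bcolor (T0 N + k - 1) (R.assign (T0 N + k)) = 0 ∧
      R.nbins (T0 N + k - 1) = Pv N := by
  have hP := P_ge hN
  obtain ⟨g1, g2, g3, g4, g5, g6⟩ := A_inv (R := R) hN (k-1) (by omega)
  have ht1 : 1 ≤ T0 N + k := by omega
  have ht2 : T0 N + k ≤ nv N := by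
    have h' : T0 N + k ≤ TA N := by unfold TA; omega
    have := TA_le_TB (N := N)
    have := TB_le_nv (N := N)
    omega
  have htm : T0 N + k - 1 = T0 N + (k-1) := by omega
  have hct : cc N (T0 N + k) = (T0 N + k) + 4 := cc_A (by omega) (by unfold TA; omega)
  have hp : PlaceStep R (T0 N + k) :=
    place_of_other ht1 ht2 (g := 0) (by omega) (by rw [htm, g2]; omega)
  refine ⟨hp, ?_, by rw [htm]; exact g1⟩
  apply forced_class hp (by omega)
  intro g hg1 hg2
  rw [htm, g2]
  have := g3 g hg2
  omega

/-- number of black items up to time `t0` placed into white bins -/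
def coldB (R : BaPRun (nv N) (cc N)) (t0 : ℕ) : ℕ :=
  ((Finset.Icc (TA N + 1) t0).filter
    (fun t => R.bcolor (t-1) (R.assign t) = 0)).card

/-- invariant during the B block -/
def BS (R : BaPRun (nv N) (cc N)) (k : ℕ) : Prop :=
  R.nbins (TA N + k) = Pv N ∧ cnt R (TA N + k) 3 = k ∧
    cnt R (TA N + k) 0 + coldB R (TA N + k) ≤ 1 ∧
    (∀ g, g ≠ 0 → g ≠ 3 → cnt R (TA N + k) g ≤ 1) ∧
    cnt R (TA N + k) 1 = 0 ∧ cnt R (TA N + k) 2 = 0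

lemma B_inv (hN : 2 ≤ N) : ∀ k, k ≤ Mv N - 1 → BS R k := by
  have hP := P_ge hN
  have hM := M_ge hN
  obtain ⟨a1, a2, a3, a4, a5, a6⟩ := A_inv (R := R) hN (Pv N - 1) le_rfl
  have hTA : T0 N + (Pv N - 1) = TA N := by unfold TA; omega
  rw [hTA] at a1 a2 a3 a4 a5 a6
  intro k
  induction k with
  | zero =>
    intro _
    refine ⟨by simpa using a1, by simpa using a6, ?_, fun g hg0 hg3 => by simpa using a3 g hg0,
      by simpa using a4, by simpa using a5⟩
    · have : coldB R (TA N + 0) = 0 := by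
        unfold coldB
        simp
      rw [this]
      simp only [Nat.add_zero]
      omega
  | succ k ih =>
    intro hk
    obtain ⟨g1, g2, g3, g4, g5, g6⟩ := ih (by omega)
    have ht1 : 1 ≤ TA N + (k+1) := by have := T0_le_TA (N := N); unfold T0 at this; omega
    have htTB : TA N + (k+1) ≤ TB N := by unfold TB; omega
    have ht2 : TA N + (k+1) ≤ nv N := le_trans htTB TB_le_nv
    have htm : TA N + (k+1) - 1 = TA N + k := by omega
    have hct : cc N (TA N + (k+1)) = 3 := cc_B (by omega) htTB
    have hp : PlaceStep R (TA N + (k+1)) := by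
      have hlt : cnt R (TA N + k) 3 < R.nbins (TA N + k) := by
        rw [g1, g2]; omega
      obtain ⟨g, hg3, hgpos⟩ := exists_other_class hlt
      exact place_of_other ht1 ht2 (g := g) (by rw [hct]; exact hg3) (by rw [htm]; exact hgpos)
    have hGne := hp.hne
    have hGpos := place_G_pos hp
    have eNew := cnt_place_new ht1 ht2 hp
    have eOld := cnt_place_old ht1 ht2 hp
    have hnb' := hp.hnb
    rw [htm] at eNew eOld hnb' hGne hGpos
    rw [hct] at eNew hGne
    -- coldB increment
    have hcold : coldB R (TA N + (k+1)) =
        coldB R (TA N + k) + (if R.bcolor (TA N + k) (R.assign (TA N + (k+1))) = 0 then 1 else 0) := by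
      unfold coldB
      have hins : Finset.Icc (TA N + 1) (TA N + (k+1)) =
          insert (TA N + (k+1)) (Finset.Icc (TA N + 1) (TA N + k)) := by
        ext x
        simp only [Finset.mem_insert, Finset.mem_Icc]
        omega
      rw [hins, Finset.filter_insert]
      simp only [htm]
      split_ifs with hc
      · rw [Finset.card_insert_of_notMem (by
          simp only [Finset.mem_filter, Finset.mem_Icc]
          omega)]
      · simp
    refine ⟨by omega, by omega, ?_, ?_, ?_, ?_⟩
    · rcases eq_or_ne (R.bcolor (TA N + k) (R.assign (TA N + (k+1)))) 0 with hG | hG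
      · rw [hG] at eOld
        rw [hcold, if_pos hG]
        omega
      · have e0 : cnt R (TA N + (k+1)) 0 = cnt R (TA N + k) 0 := by
          have := cnt_place_other ht1 ht2 hp (g := 0) (by rw [hct]; omega)
            (by rw [htm]; exact fun hcon => hG hcon.symm)
          rw [htm] at this; exact this
        rw [hcold, if_neg hG]
        omega
    · intro g hg0 hg3
      rcases eq_or_ne g (R.bcolor (TA N + k) (R.assign (TA N + (k+1)))) with rfl | hgG
      · have := g4 _ hg0 hg3; omega
      · have := cnt_place_other ht1 ht2 hp (g := g) (by rw [hct]; exact hg3)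
          (by rw [htm]; exact hgG)
        rw [htm] at this
        rw [this]
        exact g4 g hg0 hg3
    · have hGne1 : (1:ℕ) ≠ R.bcolor (TA N + k) (R.assign (TA N + (k+1))) := by
        intro hcon; rw [← hcon] at hGpos; omega
      have := cnt_place_other ht1 ht2 hp (g := 1) (by rw [hct]; omega) (by rw [htm]; exact hGne1)
      rw [htm] at this; rw [this]; exact g5
    · have hGne2 : (2:ℕ) ≠ R.bcolor (TA N + k) (R.assign (TA N + (k+1))) := by
        intro hcon; rw [← hcon] at hGpos; omega
      have := cnt_place_other ht1 ht2 hp (g := 2) (by rw [hct]; omega) (by rw [htm]; exact hGne2)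
      rw [htm] at this; rw [this]; exact g6

/-- facts about each B step -/
lemma B_G (hN : 2 ≤ N) {k : ℕ} (hk1 : 1 ≤ k) (hk2 : k ≤ Mv N - 1) :
    PlaceStep R (TA N + k) ∧
      R.bcolor (TA N + k - 1) (R.assign (TA N + k)) ≠ 3 ∧
      R.nbins (TA N + k - 1) = Pv N := by
  have hP := P_ge hN
  have hM := M_ge hN
  obtain ⟨g1, g2, g3, g4, g5, g6⟩ := B_inv (R := R) hN (k-1) (by omega)
  have ht1 : 1 ≤ TA N + k := by have := T0_le_TA (N := N); unfold T0 at this; omega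
  have htTB : TA N + k ≤ TB N := by unfold TB; omega
  have ht2 : TA N + k ≤ nv N := le_trans htTB TB_le_nv
  have htm : TA N + k - 1 = TA N + (k-1) := by omega
  have hct : cc N (TA N + k) = 3 := cc_B (by omega) htTB
  have hp : PlaceStep R (TA N + k) := by
    have hlt : cnt R (TA N + (k-1)) 3 < R.nbins (TA N + (k-1)) := by
      rw [g1, g2]; omega
    obtain ⟨g, hg3, hgpos⟩ := exists_other_class hlt
    exact place_of_other ht1 ht2 (g := g) (by rw [hct]; exact hg3) (by rw [htm]; exact hgpos)
  refine ⟨hp, ?_, by rw [htm]; exact g1⟩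
  have := hp.hne
  rw [hct] at this
  exact this

/-- invariant during the C block -/
def CS (R : BaPRun (nv N) (cc N)) (k : ℕ) : Prop :=
  R.nbins (TB N + k) = Pv N ∧ cnt R (TB N + k) 3 = (Mv N - 1) - k ∧
    (∀ g, g ≠ 3 → cnt R (TB N + k) g ≤ 1)

lemma C_inv (hN : 2 ≤ N) : ∀ k, k ≤ Mv N - 2 → CS R k := by
  have hP := P_ge hN
  have hM := M_ge hN
  obtain ⟨b1, b2, b3, b4, b5, b6⟩ := B_inv (R := R) hN (Mv N - 1) le_rfl
  have hTB : TA N + (Mv N - 1) = TB N := by unfold TB; omega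
  rw [hTB] at b1 b2 b3 b4 b5 b6
  intro k
  induction k with
  | zero =>
    intro _
    refine ⟨by simpa using b1, by simpa using b2, ?_⟩
    intro g hg3
    rcases eq_or_ne g 0 with rfl | hg0
    · simpa using (by omega : cnt R (TB N) 0 ≤ 1)
    · simpa using b4 g hg0 hg3
  | succ k ih =>
    intro hk
    obtain ⟨g1, g2, g3⟩ := ih (by omega)
    have ht1 : 1 ≤ TB N + (k+1) := by have := T0_le_TA (N := N); unfold T0 at this; omega
    have ht2 : TB N + (k+1) ≤ nv N := by unfold nv; omega
    have htm : TB N + (k+1) - 1 = TB N + k := by omega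
    have hct : cc N (TB N + (k+1)) = (TB N + (k+1)) + 4 := cc_C (by omega)
    have hp : PlaceStep R (TB N + (k+1)) :=
      place_of_other ht1 ht2 (g := 3) (by omega) (by rw [htm, g2]; omega)
    have hG : R.bcolor (TB N + (k+1) - 1) (R.assign (TB N + (k+1))) = 3 := by
      apply forced_class hp (by omega)
      intro g hg1 hg2
      rw [htm, g2]
      have := g3 g hg2
      omega
    have hfresh : cnt R (TB N + k) (cc N (TB N + (k+1))) = 0 := by
      have := cnt_fresh_at (R := R) ht1 ht2 hct
      rw [htm] at this
      exact this
    have eNew := cnt_place_new ht1 ht2 hp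
    have eOld := cnt_place_old ht1 ht2 hp
    have hnb' := hp.hnb
    rw [htm] at eNew eOld hnb' hG
    rw [hG] at eOld
    refine ⟨by omega, by omega, ?_⟩
    intro g hg3
    rcases eq_or_ne g (cc N (TB N + (k+1))) with rfl | hgc
    · rw [eNew, hfresh]
    · have := cnt_place_other ht1 ht2 hp (g := g) hgc (by rw [htm, hG]; exact hg3)
      rw [htm] at this
      rw [this]
      exact g3 g hg3

/-- facts about each C step -/
lemma C_G (hN : 2 ≤ N) {k : ℕ} (hk1 : 1 ≤ k) (hk2 : k ≤ Mv N - 2) :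
    PlaceStep R (TB N + k) ∧
      R.bcolor (TB N + k - 1) (R.assign (TB N + k)) = 3 ∧
      R.nbins (TB N + k - 1) = Pv N := by
  have hP := P_ge hN
  have hM := M_ge hN
  obtain ⟨g1, g2, g3⟩ := C_inv (R := R) hN (k-1) (by omega)
  have ht1 : 1 ≤ TB N + k := by have := T0_le_TA (N := N); unfold T0 at this; omega
  have ht2 : TB N + k ≤ nv N := by unfold nv; omega
  have htm : TB N + k - 1 = TB N + (k-1) := by omega
  have hct : cc N (TB N + k) = (TB N + k) + 4 := cc_C (by omega)
  have hp : PlaceStep R (TB N + k) :=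
    place_of_other ht1 ht2 (g := 3) (by omega) (by rw [htm, g2]; omega)
  refine ⟨hp, ?_, by rw [htm]; exact g1⟩
  apply forced_class hp (by omega)
  intro g hg1 hg2
  rw [htm, g2]
  have := g3 g hg2
  omega

/-- the final number of pseudo-bins -/
lemma nbins_final (hN : 2 ≤ N) : R.nbins (nv N) = Pv N := by
  have hM := M_ge hN
  have := (C_inv (R := R) hN (Mv N - 2) le_rfl).1
  have hnv : TB N + (Mv N - 2) = nv N := by unfold nv; omega
  rw [hnv] at this
  exact this

/-- there is at most one black item placed into a white bin -/
lemma coldB_le_one (hN : 2 ≤ N) : coldB R (TB N) ≤ 1 := by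
  have hM := M_ge hN
  have h := (B_inv (R := R) hN (Mv N - 1) le_rfl).2.2.1
  have hTB : TA N + (Mv N - 1) = TB N := by unfold TB; omega
  rw [hTB] at h
  omega

end ABC
section Struct

variable {N : ℕ} {R : BaPRun (nv N) (cc N)}

/-- step facts in `t` form, A block -/
lemma A_step_t (hN : 2 ≤ N) {t : ℕ} (h1 : T0 N < t) (h2 : t ≤ TA N) :
    PlaceStep R t ∧ R.bcolor (t-1) (R.assign t) = 0 ∧ R.nbins (t-1) = Pv N := by
  have := A_G (R := R) hN (k := t - T0 N) (by omega) (by unfold TA at h2; omega)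
  have he : T0 N + (t - T0 N) = t := by omega
  rw [he] at this
  exact this

lemma B_step_t (hN : 2 ≤ N) {t : ℕ} (h1 : TA N < t) (h2 : t ≤ TB N) :
    PlaceStep R t ∧ R.bcolor (t-1) (R.assign t) ≠ 3 ∧ R.nbins (t-1) = Pv N := by
  have := B_G (R := R) hN (k := t - TA N) (by omega) (by unfold TB at h2; omega)
  have he : TA N + (t - TA N) = t := by omega
  rw [he] at this
  exact this

lemma C_step_t (hN : 2 ≤ N) {t : ℕ} (h1 : TB N < t) (h2 : t ≤ nv N) :
    PlaceStep R t ∧ R.bcolor (t-1) (R.assign t) = 3 ∧ R.nbins (t-1) = Pv N := by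
  have := C_G (R := R) hN (k := t - TB N) (by omega) (by unfold nv at h2; omega)
  have he : TB N + (t - TB N) = t := by omega
  rw [he] at this
  exact this

/-- the A , B , C items assigned to pseudo-bin `j` -/
def SAj (R : BaPRun (nv N) (cc N)) (j : ℕ) : Finset ℕ :=
  (Finset.Icc (T0 N + 1) (TA N)).filter fun t => R.assign t = j
def SBj (R : BaPRun (nv N) (cc N)) (j : ℕ) : Finset ℕ :=
  (Finset.Icc (TA N + 1) (TB N)).filter fun t => R.assign t = j
def SCj (R : BaPRun (nv N) (cc N)) (j : ℕ) : Finset ℕ :=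
  (Finset.Icc (TB N + 1) (nv N)).filter fun t => R.assign t = j

/-- the maximal item of a bin before time t, with its color -/
lemma last_in_bin {t j : ℕ} (h1 : 1 ≤ t) (ht : t - 1 ≤ nv N) (hj1 : 1 ≤ j)
    (hj2 : j ≤ R.nbins (t-1)) :
    ∃ u ∈ binItems R (t-1) j, (∀ v ∈ binItems R (t-1) j, v ≤ u) ∧ R.bcolor (t-1) j = cc N u :=
  run_last_color R (t-1) ht j hj1 hj2

lemma mem_binItems {t j v : ℕ} :
    v ∈ binItems R t j ↔ (1 ≤ v ∧ v ≤ t) ∧ R.assign v = j := by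
  unfold binItems
  simp [Finset.mem_filter, Finset.mem_Icc]

/-- a cold black item: every earlier item of its bin is a zero item -/
lemma cold_black (hN : 2 ≤ N) {t : ℕ} (h1 : TA N < t) (h2 : t ≤ TB N)
    (hcold : R.bcolor (t-1) (R.assign t) = 0) :
    ∀ v ∈ binItems R (t-1) (R.assign t), v ≤ T0 N := by
  obtain ⟨hp, hne3, hnb⟩ := B_step_t (R := R) hN h1 h2
  have hT0A := T0_le_TA (N := N)
  have hBn := TB_le_nv (N := N)
  have hP := P_ge hN
  obtain ⟨u, hu, humax, hucol⟩ := last_in_bin (R := R) (t := t) (by omega) (by omega) hp.ha1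
    hp.ha2
  rw [hcold] at hucol
  have hule : u ≤ T0 N := by
    have : cc N u ≤ 2 := by omega
    exact cc_le2_iff.1 this
  intro v hv
  exact le_trans (humax v hv) hule

/-- a hot black item has an A item of the same bin just before it -/
lemma hot_black (hN : 2 ≤ N) {t : ℕ} (h1 : TA N < t) (h2 : t ≤ TB N)
    (hhot : R.bcolor (t-1) (R.assign t) ≠ 0) :
    ∃ u ∈ SAj R (R.assign t), (∀ v ∈ binItems R (t-1) (R.assign t), v ≤ u) := by
  obtain ⟨hp, hne3, hnb⟩ := B_step_t (R := R) hN h1 h2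
  have hT0A := T0_le_TA (N := N)
  have hBn := TB_le_nv (N := N)
  have hP := P_ge hN
  have hM := M_ge hN
  -- the bin color is not 1 or 2
  obtain ⟨b1, b2, b3, b4, b5, b6⟩ := B_inv (R := R) hN (t - 1 - TA N) (by unfold TB at h2; omega)
  have he : TA N + (t - 1 - TA N) = t - 1 := by omega
  rw [he] at b1 b2 b3 b4 b5 b6
  have hGpos := place_G_pos hp
  have hG12 : R.bcolor (t-1) (R.assign t) ≠ 1 ∧ R.bcolor (t-1) (R.assign t) ≠ 2 := by
    constructor <;> intro hcon <;> rw [hcon] at hGpos <;> omega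
  obtain ⟨u, hu, humax, hucol⟩ := last_in_bin (R := R) (t := t) (by omega) (by omega) hp.ha1
    hp.ha2
  have hge4 : 4 ≤ cc N u := by omega
  rw [cc_ge4_iff] at hge4
  rcases hge4 with ⟨hu1, hu2⟩ | hu1
  · refine ⟨u, ?_, humax⟩
    unfold SAj
    rw [mem_binItems] at hu
    simp only [Finset.mem_filter, Finset.mem_Icc]
    exact ⟨⟨by omega, hu2⟩, hu.2⟩
  · rw [mem_binItems] at hu
    omega

/-- a C item has a black item of the same bin just before it -/
lemma c_pred (hN : 2 ≤ N) {t : ℕ} (h1 : TB N < t) (h2 : t ≤ nv N) :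
    ∃ u ∈ SBj R (R.assign t), (∀ v ∈ binItems R (t-1) (R.assign t), v ≤ u) := by
  obtain ⟨hp, h3, hnb⟩ := C_step_t (R := R) hN h1 h2
  have hT0A := T0_le_TA (N := N)
  have hAB := TA_le_TB (N := N)
  have hT0p : 1 ≤ T0 N := by have := M_ge hN; unfold T0; nlinarith
  obtain ⟨u, hu, humax, hucol⟩ := last_in_bin (R := R) (t := t) (by omega) (by omega) hp.ha1
    hp.ha2
  rw [h3] at hucol
  have h3u : cc N u = 3 := hucol.symm
  rw [cc_eq3_iff] at h3u
  refine ⟨u, ?_, humax⟩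
  unfold SBj
  rw [mem_binItems] at hu
  simp only [Finset.mem_filter, Finset.mem_Icc]
  exact ⟨⟨by omega, h3u.2⟩, hu.2⟩

/-- items of a bin whose current color is white are all zero items -/
lemma white_bin_items (hN : 2 ≤ N) {t : ℕ} (hp : PlaceStep R t) (h1 : 1 ≤ t) (htn : t ≤ nv N)
    (hcold : R.bcolor (t-1) (R.assign t) = 0) :
    ∀ v ∈ binItems R (t-1) (R.assign t), v ≤ T0 N := by
  obtain ⟨u, hu, humax, hucol⟩ := last_in_bin (R := R) (by omega) (by omega) hp.ha1 hp.ha2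
  rw [hcold] at hucol
  have hule : u ≤ T0 N := cc_le2_iff.1 (by omega)
  intro v hv
  exact le_trans (humax v hv) hule

lemma SAj_card (hN : 2 ≤ N) (j : ℕ) : (SAj R j).card ≤ 1 := by
  rw [Finset.card_le_one]
  intro a ha b hb
  unfold SAj at ha hb
  simp only [Finset.mem_filter, Finset.mem_Icc] at ha hb
  have hT0A := T0_le_TA (N := N)
  have hAB := TA_le_TB (N := N)
  have hBn := TB_le_nv (N := N)
  by_contra hne
  have key : ∀ x y : ℕ, ((T0 N + 1 ≤ x ∧ x ≤ TA N) ∧ R.assign x = j) →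
      ((T0 N + 1 ≤ y ∧ y ≤ TA N) ∧ R.assign y = j) → x < y → False := by
    intro x y hx hy hxy
    obtain ⟨hp, hcold, hnb⟩ := A_step_t (R := R) hN (t := y) (by omega) (by omega)
    have := white_bin_items (R := R) hN hp (by omega) (by omega) hcold
    have hxmem : x ∈ binItems R (y-1) (R.assign y) := by
      rw [mem_binItems, hy.2]
      exact ⟨⟨by omega, by omega⟩, hx.2⟩
    have := this x hxmem
    omega
  rcases Nat.lt_or_ge a b with hab | hab
  · exact key a b ha hb hab
  · exact key b a hb ha (by omega)

lemma SBj_card (hN : 2 ≤ N) (j : ℕ) : (SBj R j).card ≤ 1 := by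
  rw [Finset.card_le_one]
  intro a ha b hb
  unfold SBj at ha hb
  simp only [Finset.mem_filter, Finset.mem_Icc] at ha hb
  have hT0A := T0_le_TA (N := N)
  have hAB := TA_le_TB (N := N)
  have hBn := TB_le_nv (N := N)
  by_contra hne
  have key : ∀ x y : ℕ, ((TA N + 1 ≤ x ∧ x ≤ TB N) ∧ R.assign x = j) →
      ((TA N + 1 ≤ y ∧ y ≤ TB N) ∧ R.assign y = j) → x < y → False := by
    intro x y hx hy hxy
    obtain ⟨hp, hne3, hnb⟩ := B_step_t (R := R) hN (t := y) (by omega) (by omega)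
    obtain ⟨u, hu, humax, hucol⟩ := last_in_bin (R := R) (t := y) (by omega) (by omega)
      hp.ha1 hp.ha2
    have hxmem : x ∈ binItems R (y-1) (R.assign y) := by
      rw [mem_binItems, hy.2]
      exact ⟨⟨by omega, by omega⟩, hx.2⟩
    have hux := humax x hxmem
    rw [mem_binItems] at hu
    have hu3 : cc N u = 3 := cc_B (by omega) (by omega)
    rw [← hucol] at hu3
    exact hne3 hu3
  rcases Nat.lt_or_ge a b with hab | hab
  · exact key a b ha hb hab
  · exact key b a hb ha (by omega)

lemma SCj_card (hN : 2 ≤ N) (j : ℕ) : (SCj R j).card ≤ 1 := by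
  rw [Finset.card_le_one]
  intro a ha b hb
  unfold SCj at ha hb
  simp only [Finset.mem_filter, Finset.mem_Icc] at ha hb
  have hT0A := T0_le_TA (N := N)
  have hAB := TA_le_TB (N := N)
  by_contra hne
  have key : ∀ x y : ℕ, ((TB N + 1 ≤ x ∧ x ≤ nv N) ∧ R.assign x = j) →
      ((TB N + 1 ≤ y ∧ y ≤ nv N) ∧ R.assign y = j) → x < y → False := by
    intro x y hx hy hxy
    obtain ⟨hp, h3, hnb⟩ := C_step_t (R := R) hN (t := y) (by omega) (by omega)
    obtain ⟨u, hu, humax, hucol⟩ := last_in_bin (R := R) (t := y) (by omega) (by omega)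
      hp.ha1 hp.ha2
    have hxmem : x ∈ binItems R (y-1) (R.assign y) := by
      rw [mem_binItems, hy.2]
      exact ⟨⟨by omega, by omega⟩, hx.2⟩
    have hux := humax x hxmem
    rw [mem_binItems] at hu
    have hu4 : cc N u = u + 4 := cc_C (by omega)
    rw [h3] at hucol
    omega
  rcases Nat.lt_or_ge a b with hab | hab
  · exact key a b ha hb hab
  · exact key b a hb ha (by omega)

end Struct
section SortCost

/-- sorting a union of separated finsets -/
lemma sort_append {X Y : Finset ℕ} (h : ∀ x ∈ X, ∀ y ∈ Y, x < y) :
    (X ∪ Y).sort (· ≤ ·) = X.sort (· ≤ ·) ++ Y.sort (· ≤ ·) := by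
  have hd : Disjoint X Y := by
    rw [Finset.disjoint_left]
    intro a haX haY
    exact absurd (h a haX a haY) (lt_irrefl a)
  haveI : IsAntisymm ℕ (fun x y : ℕ => x ≤ y) := ⟨fun a b h1 h2 => le_antisymm h1 h2⟩
  refine (fun hp h1 h2 => List.Perm.eq_of_pairwise' (r := (· ≤ · : ℕ → ℕ → Prop)) h1 h2 hp) ?_ ?_ ?_
  · rw [← Multiset.coe_eq_coe]
    have hval : (X ∪ Y).val = X.val + Y.val := by
      rw [← Finset.disjUnion_eq_union X Y hd]
      rfl
    show ((X ∪ Y).sort (· ≤ ·) : Multiset ℕ) = ↑(X.sort (· ≤ ·) ++ Y.sort (· ≤ ·))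
    rw [Finset.sort_eq, hval, ← Multiset.coe_add, Finset.sort_eq, Finset.sort_eq]
  · exact Finset.pairwise_sort _ _
  · rw [List.pairwise_append]
    refine ⟨Finset.pairwise_sort _ _, Finset.pairwise_sort _ _, ?_⟩
    intro x hx y hy
    rw [Finset.mem_sort] at hx hy
    exact le_of_lt (h x hx y hy)

lemma map_sort_zeros {N : ℕ} {ε : ℝ} {Z : Finset ℕ} (hZ : ∀ x ∈ Z, x ≤ T0 N) :
    (Z.sort (· ≤ ·)).map (ss N ε) = List.replicate Z.card (0:ℝ) := by
  rw [List.eq_replicate_iff]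
  constructor
  · rw [List.length_map, Finset.length_sort]
  · intro b hb
    rw [List.mem_map] at hb
    obtain ⟨x, hx, rfl⟩ := hb
    rw [Finset.mem_sort] at hx
    exact ss_zero (hZ x hx)

variable {N : ℕ} {R : BaPRun (nv N) (cc N)} {ε : ℝ}

/-- zero items of bin j -/
def Zj (R : BaPRun (nv N) (cc N)) (j : ℕ) : Finset ℕ :=
  (Finset.Icc 1 (T0 N)).filter fun t => R.assign t = j

lemma items_split (j : ℕ) :
    (Finset.Icc 1 (nv N)).filter (fun t => R.assign t = j)
      = ((Zj R j ∪ SAj R j) ∪ SBj R j) ∪ SCj R j := by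
  have h1 := T0_le_TA (N := N)
  have h2 := TA_le_TB (N := N)
  have h3 := TB_le_nv (N := N)
  unfold Zj SAj SBj SCj
  ext x
  simp only [Finset.mem_union, Finset.mem_filter, Finset.mem_Icc]
  constructor
  · rintro ⟨⟨hx1, hx2⟩, hx3⟩
    rcases le_or_gt x (T0 N) with h | h
    · exact Or.inl (Or.inl (Or.inl ⟨⟨hx1, h⟩, hx3⟩))
    rcases le_or_gt x (TA N) with h' | h'
    · exact Or.inl (Or.inl (Or.inr ⟨⟨by omega, h'⟩, hx3⟩))
    rcases le_or_gt x (TB N) with h'' | h''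
    · exact Or.inl (Or.inr ⟨⟨by omega, h''⟩, hx3⟩)
    · exact Or.inr ⟨⟨by omega, hx2⟩, hx3⟩
  · rintro ((( ⟨⟨a, b⟩, hc⟩ | ⟨⟨a, b⟩, hc⟩) | ⟨⟨a, b⟩, hc⟩) | ⟨⟨a, b⟩, hc⟩) <;>
      exact ⟨⟨by omega, by omega⟩, hc⟩

lemma items_sort (j : ℕ) :
    ((Finset.Icc 1 (nv N)).filter (fun t => R.assign t = j)).sort (· ≤ ·)
      = (Zj R j).sort (· ≤ ·) ++ (SAj R j).sort (· ≤ ·) ++ (SBj R j).sort (· ≤ ·)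
        ++ (SCj R j).sort (· ≤ ·) := by
  have h1 := T0_le_TA (N := N)
  have h2 := TA_le_TB (N := N)
  have mZ : ∀ x ∈ Zj R j, x ≤ T0 N := by
    intro x hx; unfold Zj at hx; simp only [Finset.mem_filter, Finset.mem_Icc] at hx; omega
  have mA : ∀ x ∈ SAj R j, T0 N < x ∧ x ≤ TA N := by
    intro x hx; unfold SAj at hx; simp only [Finset.mem_filter, Finset.mem_Icc] at hx; omega
  have mB : ∀ x ∈ SBj R j, TA N < x ∧ x ≤ TB N := by
    intro x hx; unfold SBj at hx; simp only [Finset.mem_filter, Finset.mem_Icc] at hx; omega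
  have mC : ∀ x ∈ SCj R j, TB N < x := by
    intro x hx; unfold SCj at hx; simp only [Finset.mem_filter, Finset.mem_Icc] at hx; omega
  rw [items_split j]
  rw [sort_append (X := (Zj R j ∪ SAj R j) ∪ SBj R j) (Y := SCj R j) ?hc]
  case hc =>
    intro x hx y hy
    rcases Finset.mem_union.1 hx with hx | hx
    · rcases Finset.mem_union.1 hx with hx | hx
      · have := mZ x hx; have := mC y hy; omega
      · have := mA x hx; have := mC y hy; omega
    · have := mB x hx; have := mC y hy; omega
  rw [sort_append (X := Zj R j ∪ SAj R j) (Y := SBj R j) ?hb]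
  case hb =>
    intro x hx y hy
    rcases Finset.mem_union.1 hx with hx | hx
    · have := mZ x hx; have := mB y hy; omega
    · have := mA x hx; have := mB y hy; omega
  rw [sort_append (X := Zj R j) (Y := SAj R j) ?ha]
  case ha =>
    intro x hx y hy
    have := mZ x hx; have := mA y hy; omega

/-- every pseudo-bin gets an item in the zero part -/
lemma bin_opened (hN : 2 ≤ N) {j : ℕ} (hj1 : 1 ≤ j) (hj2 : j ≤ Pv N) :
    (Zj R j).Nonempty := by
  have hz := (zero_main (R := R) hN).1
  have key : ∀ t, t ≤ nv N → ∀ i, 1 ≤ i → i ≤ R.nbins t →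
      ∃ u, 1 ≤ u ∧ u ≤ t ∧ R.assign u = i := by
    intro t
    induction t with
    | zero => intro _ i hi1 hi2; rw [R.nbins_zero] at hi2; omega
    | succ t ih =>
      intro htn i hi1 hi2
      rcases run_nbins_step R (t := t+1) (by omega) htn with h | ⟨h, ha⟩ <;>
        rw [show t + 1 - 1 = t from rfl] at *
      · obtain ⟨u, hu⟩ := ih (by omega) i hi1 (by omega)
        exact ⟨u, by omega, by omega, hu.2.2⟩
      · rcases Nat.lt_or_ge i (R.nbins t + 1) with h' | h'
        · obtain ⟨u, hu⟩ := ih (by omega) i hi1 (by omega)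
          exact ⟨u, by omega, by omega, hu.2.2⟩
        · exact ⟨t+1, by omega, le_rfl, by rw [ha]; omega⟩
  obtain ⟨u, hu1, hu2, hu3⟩ := key (T0 N) T0_le_nv j hj1 (by rw [hz]; exact hj2)
  exact ⟨u, by unfold Zj; simp only [Finset.mem_filter, Finset.mem_Icc]; exact ⟨⟨hu1, hu2⟩, hu3⟩⟩

section NFvals

lemma nf_bin_eval {z : ℕ} (hz : 1 ≤ z) (L : List ℝ) :
    nfBins (List.replicate z 0 ++ L) = 1 + nfExtra L 0 := by
  obtain ⟨z', rfl⟩ : ∃ z', z = z'+1 := ⟨z-1, by omega⟩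
  exact nfBins_zeros z' L

lemma nfE_nil' : nfExtra ([] : List ℝ) 0 = 0 := rfl

lemma nfE_A (hε1 : 0 < ε) (hε2 : 2*ε ≤ 1) : nfExtra [2*ε] 0 = 0 := by
  rw [nfExtra_cons, if_pos (by linarith), nfExtra_nil]

lemma nfE_B (hε1 : 0 < ε) : nfExtra [1-ε] 0 = 0 := by
  rw [nfExtra_cons, if_pos (by linarith), nfExtra_nil]

lemma nfE_AB (hε1 : 0 < ε) (hε2 : 2*ε ≤ 1) : nfExtra [2*ε, 1-ε] 0 = 1 := by
  rw [nfExtra_cons, if_pos (by linarith), nfExtra_cons, if_neg (by intro h; linarith),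
    nfExtra_nil]

lemma nfE_BC (hε1 : 0 < ε) : nfExtra [1-ε, 2*ε] 0 = 1 := by
  rw [nfExtra_cons, if_pos (by linarith), nfExtra_cons, if_neg (by intro h; linarith),
    nfExtra_nil]

lemma nfE_ABC (hε1 : 0 < ε) (hε2 : 2*ε ≤ 1) : nfExtra [2*ε, 1-ε, 2*ε] 0 = 2 := by
  rw [nfExtra_cons, if_pos (by linarith), nfExtra_cons, if_neg (by intro h; linarith),
    nfExtra_cons, if_neg (by intro h; linarith), nfExtra_nil]

end NFvals

end SortCost
section CostBound

variable {N : ℕ} {R : BaPRun (nv N) (cc N)} {ε : ℝ}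

/-- the hot black items -/
def HB (R : BaPRun (nv N) (cc N)) : Finset ℕ :=
  (Finset.Icc (TA N + 1) (TB N)).filter fun t => R.bcolor (t-1) (R.assign t) ≠ 0

lemma HBj_sub (j : ℕ) : (HB R).filter (fun t => R.assign t = j) ⊆ SBj R j := by
  intro t ht
  unfold HB at ht
  unfold SBj
  simp only [Finset.mem_filter, Finset.mem_Icc] at ht ⊢
  exact ⟨ht.1.1, ht.2⟩

lemma HBj_nonempty_SA (hN : 2 ≤ N) {j : ℕ}
    (h : ((HB R).filter (fun t => R.assign t = j)).Nonempty) : (SAj R j).Nonempty := by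
  obtain ⟨t, ht⟩ := h
  unfold HB at ht
  simp only [Finset.mem_filter, Finset.mem_Icc] at ht
  obtain ⟨⟨⟨ht1, ht2⟩, hhot⟩, hj⟩ := ht
  obtain ⟨u, hu, -⟩ := hot_black (R := R) hN (by omega) ht2 hhot
  rw [hj] at hu
  exact ⟨u, hu⟩

lemma SCj_nonempty_SB (hN : 2 ≤ N) {j : ℕ} (h : (SCj R j).Nonempty) :
    (SBj R j).Nonempty := by
  obtain ⟨t, ht⟩ := h
  unfold SCj at ht
  simp only [Finset.mem_filter, Finset.mem_Icc] at ht
  obtain ⟨⟨ht1, ht2⟩, hj⟩ := ht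
  obtain ⟨u, hu, -⟩ := c_pred (R := R) hN (by omega) ht2
  rw [hj] at hu
  exact ⟨u, hu⟩

lemma ssA_mem {t : ℕ} (h : t ∈ SAj R t') : True := trivial

/-- the per-pseudo-bin lower bound -/
lemma bin_cost (hN : 2 ≤ N) (hε1 : 0 < ε) (hε2 : 2*ε ≤ 1) {j : ℕ}
    (hj1 : 1 ≤ j) (hj2 : j ≤ Pv N) :
    1 + ((HB R).filter (fun t => R.assign t = j)).card + (SCj R j).card
      ≤ nfBins ((((Finset.Icc 1 (nv N)).filter fun t => R.assign t = j).sort (· ≤ ·)).map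
          (ss N ε)) := by
  rw [items_sort (R := R) j]
  have hZne := bin_opened (R := R) hN hj1 hj2
  have hZcard : 1 ≤ (Zj R j).card := Finset.card_pos.2 hZne
  have hZmap : ((Zj R j).sort (· ≤ ·)).map (ss N ε) = List.replicate (Zj R j).card (0:ℝ) :=
    map_sort_zeros (fun x hx => by
      unfold Zj at hx; simp only [Finset.mem_filter, Finset.mem_Icc] at hx; omega)
  simp only [List.map_append, hZmap]
  rcases Finset.eq_empty_or_nonempty (SBj R j) with hB | hB
  · -- no black item in this bin
    have hHB : ((HB R).filter (fun t => R.assign t = j)).card = 0 := by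
      rw [Finset.card_eq_zero, ← Finset.subset_empty]
      rw [← hB]
      exact HBj_sub j
    have hC : (SCj R j) = ∅ := by
      by_contra hc
      obtain ⟨u, hu⟩ := SCj_nonempty_SB (R := R) hN (Finset.nonempty_iff_ne_empty.2 hc)
      rw [hB] at hu
      exact absurd hu (Finset.notMem_empty u)
    rw [hHB, hC, hB]
    rcases Finset.eq_empty_or_nonempty (SAj R j) with hA | hA
    · rw [hA]
      simp only [Finset.sort_empty, List.map_nil, List.append_nil]
      have heval : nfBins (List.replicate (Zj R j).card (0:ℝ)) = 1 := by
        rw [← List.append_nil (List.replicate (Zj R j).card (0:ℝ)), nf_bin_eval hZcard, nfE_nil']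
      rw [heval]
      simp
    · obtain ⟨ta, hta⟩ := Finset.card_eq_one.1
        (le_antisymm (SAj_card (R := R) hN j) (Finset.card_pos.2 hA))
      have htamem : ta ∈ SAj R j := by rw [hta]; exact Finset.mem_singleton_self ta
      have hssa : ss N ε ta = 2*ε := by
        unfold SAj at htamem
        simp only [Finset.mem_filter, Finset.mem_Icc] at htamem
        exact ss_A (by omega) htamem.1.2
      rw [hta]
      simp only [Finset.sort_singleton, Finset.sort_empty, List.map_cons, List.map_nil,
        List.append_nil, hssa]
      rw [nf_bin_eval hZcard, nfE_A hε1 hε2]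
      simp
  · -- a黑 item tb
    obtain ⟨tb, htb⟩ := Finset.card_eq_one.1
      (le_antisymm (SBj_card (R := R) hN j) (Finset.card_pos.2 hB))
    have htbmem : tb ∈ SBj R j := by rw [htb]; exact Finset.mem_singleton_self tb
    have hssb : ss N ε tb = 1 - ε := by
      unfold SBj at htbmem
      simp only [Finset.mem_filter, Finset.mem_Icc] at htbmem
      exact ss_B (by omega) htbmem.1.2
    have hHB1 : ((HB R).filter (fun t => R.assign t = j)).card ≤ 1 :=
      le_trans (Finset.card_le_card (HBj_sub j)) (by rw [htb]; simp)
    rcases Finset.eq_empty_or_nonempty (SAj R j) with hA | hA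
    · -- no A item: no hot black either
      have hHB0 : ((HB R).filter (fun t => R.assign t = j)).card = 0 := by
        rw [Finset.card_eq_zero]
        by_contra hc
        obtain ⟨u, hu⟩ := HBj_nonempty_SA (R := R) hN (Finset.nonempty_iff_ne_empty.2 hc)
        rw [hA] at hu
        exact absurd hu (Finset.notMem_empty u)
      rw [hHB0, hA, htb]
      rcases Finset.eq_empty_or_nonempty (SCj R j) with hC | hC
      · rw [hC]
        simp only [Finset.sort_empty, Finset.sort_singleton, List.map_nil, List.map_cons,
          List.nil_append, List.append_nil, hssb]
        rw [nf_bin_eval hZcard, nfE_B hε1]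
        simp
      · obtain ⟨tc, htc⟩ := Finset.card_eq_one.1
          (le_antisymm (SCj_card (R := R) hN j) (Finset.card_pos.2 hC))
        have htcmem : tc ∈ SCj R j := by rw [htc]; exact Finset.mem_singleton_self tc
        have hssc : ss N ε tc = 2*ε := by
          unfold SCj at htcmem
          simp only [Finset.mem_filter, Finset.mem_Icc] at htcmem
          exact ss_C (by omega)
        rw [htc]
        simp only [Finset.sort_empty, Finset.sort_singleton, List.map_nil, List.map_cons,
          List.nil_append, List.append_nil, hssb, hssc, Finset.card_singleton]
        have : List.replicate (Zj R j).card (0:ℝ) ++ [1-ε] ++ [2*ε]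
            = List.replicate (Zj R j).card (0:ℝ) ++ [1-ε, 2*ε] := by
          simp
        rw [this, nf_bin_eval hZcard, nfE_BC hε1]
    · obtain ⟨ta, hta⟩ := Finset.card_eq_one.1
        (le_antisymm (SAj_card (R := R) hN j) (Finset.card_pos.2 hA))
      have htamem : ta ∈ SAj R j := by rw [hta]; exact Finset.mem_singleton_self ta
      have hssa : ss N ε ta = 2*ε := by
        unfold SAj at htamem
        simp only [Finset.mem_filter, Finset.mem_Icc] at htamem
        exact ss_A (by omega) htamem.1.2
      rw [hta, htb]
      rcases Finset.eq_empty_or_nonempty (SCj R j) with hC | hC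
      · rw [hC]
        simp only [Finset.sort_empty, Finset.sort_singleton, List.map_nil, List.map_cons,
          List.append_nil, hssa, hssb]
        have : List.replicate (Zj R j).card (0:ℝ) ++ [2*ε] ++ [1-ε]
            = List.replicate (Zj R j).card (0:ℝ) ++ [2*ε, 1-ε] := by
          simp
        rw [this, nf_bin_eval hZcard, nfE_AB hε1 hε2]
        simp only [Finset.card_empty]
        omega
      · obtain ⟨tc, htc⟩ := Finset.card_eq_one.1
          (le_antisymm (SCj_card (R := R) hN j) (Finset.card_pos.2 hC))
        have htcmem : tc ∈ SCj R j := by rw [htc]; exact Finset.mem_singleton_self tc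
        have hssc : ss N ε tc = 2*ε := by
          unfold SCj at htcmem
          simp only [Finset.mem_filter, Finset.mem_Icc] at htcmem
          exact ss_C (by omega)
        rw [htc]
        simp only [Finset.sort_singleton, List.map_cons, List.map_nil, hssa, hssb, hssc,
          Finset.card_singleton]
        have : List.replicate (Zj R j).card (0:ℝ) ++ [2*ε] ++ [1-ε] ++ [2*ε]
            = List.replicate (Zj R j).card (0:ℝ) ++ [2*ε, 1-ε, 2*ε] := by
          simp
        rw [this, nf_bin_eval hZcard, nfE_ABC hε1 hε2]
        omega

/-- total cost bound -/
lemma cost_bound (hN : 2 ≤ N) (hε1 : 0 < ε) (hε2 : 2*ε ≤ 1) :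
    Pv N + (Mv N - 2) + (Mv N - 2) ≤ bapCost (ss N ε) R := by
  have hM := M_ge hN
  have hP := P_ge hN
  unfold bapCost
  rw [nbins_final (R := R) hN]
  have hsum : ∑ j ∈ Finset.Icc 1 (Pv N),
      (1 + ((HB R).filter (fun t => R.assign t = j)).card + (SCj R j).card)
      ≤ ∑ j ∈ Finset.Icc 1 (Pv N),
        nfBins ((((Finset.Icc 1 (nv N)).filter fun t => R.assign t = j).sort (· ≤ ·)).map
          (ss N ε)) := by
    apply Finset.sum_le_sum
    intro j hj
    rw [Finset.mem_Icc] at hj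
    exact bin_cost hN hε1 hε2 hj.1 hj.2
  refine le_trans ?_ hsum
  rw [Finset.sum_add_distrib, Finset.sum_add_distrib, Finset.sum_const, Nat.card_Icc]
  simp only [smul_eq_mul, mul_one]
  have e1 : ∑ j ∈ Finset.Icc 1 (Pv N), ((HB R).filter (fun t => R.assign t = j)).card
      = (HB R).card := by
    rw [Finset.card_eq_sum_card_fiberwise (f := R.assign) (t := Finset.Icc 1 (Pv N))]
    intro x hx
    unfold HB at hx
    simp only [Finset.mem_coe, Finset.mem_filter, Finset.mem_Icc] at hx
    obtain ⟨hp, -, hnb⟩ := B_step_t (R := R) hN (by omega) hx.1.2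
    rw [Finset.mem_coe, Finset.mem_Icc]
    have := hp.ha1
    have := hp.ha2
    omega
  have e2 : ∑ j ∈ Finset.Icc 1 (Pv N), (SCj R j).card = Mv N - 2 := by
    unfold SCj
    rw [← Finset.card_eq_sum_card_fiberwise (f := R.assign) (t := Finset.Icc 1 (Pv N))]
    · rw [Nat.card_Icc]
      unfold nv
      omega
    · intro x hx
      simp only [Finset.mem_coe, Finset.mem_Icc] at hx
      obtain ⟨hp, -, hnb⟩ := C_step_t (R := R) hN (by omega) hx.2
      rw [Finset.mem_coe, Finset.mem_Icc]
      have := hp.ha1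
      have := hp.ha2
      omega
  have e3 : Mv N - 2 ≤ (HB R).card := by
    have hsplit := Finset.card_filter_add_card_filter_not
      (s := Finset.Icc (TA N + 1) (TB N))
      (p := fun t => R.bcolor (t-1) (R.assign t) = 0)
    have hcold := coldB_le_one (R := R) hN
    unfold coldB at hcold
    have hHBdef : (HB R).card =
        ((Finset.Icc (TA N + 1) (TB N)).filter
          (fun t => ¬ (R.bcolor (t-1) (R.assign t) = 0))).card := rfl
    rw [hHBdef]
    rw [Nat.card_Icc] at hsplit
    have hTBA : TB N = TA N + (Mv N - 1) := by unfold TB; omega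
    omega
  rw [e1, e2]
  omega

/-- the main cost bound for a run -/
lemma run_cost (hN : 2 ≤ N) (hε1 : 0 < ε) (hε2 : 2*ε ≤ 1) :
    4 * 4^(N+1) - 4 * 3^N ≤ bapCost (ss N ε) R := by
  have h := cost_bound (R := R) hN hε1 hε2
  have hM := pow3_le_M hN
  have h3 : (3:ℕ)^(N+1) = 3 * 3^N := by rw [pow_succ]; ring
  have h9 : 9 ≤ 3^N := by
    calc (9:ℕ) = 3^2 := by norm_num
    _ ≤ 3^N := Nat.pow_le_pow_right (by norm_num) hN
  have hPdef : Pv N = 2 * Mv N - 3^(N+1) := rfl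
  have hMdef : Mv N = 4^(N+1) := rfl
  omega

end CostBound
section Opt

variable {N : ℕ} {ε : ℝ}

/-- the optimal packing -/
def fopt (N t : ℕ) : ℕ :=
  if t ≤ T0 N then (t-1) % Mv N + 1
  else if t ≤ TA N then 1
  else if t ≤ TB N then t - TA N + 1
  else 1

lemma fopt_range {t : ℕ} (h1 : 1 ≤ t) (h2 : t ≤ nv N) :
    1 ≤ fopt N t ∧ fopt N t ≤ Mv N := by
  have hM := M_pos (N := N)
  unfold fopt
  split_ifs with hc1 hc2 hc3
  · have := Nat.mod_lt (t-1) hM; omega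
  · omega
  · unfold TB at hc3; omega
  · omega

lemma zero_cc_cases {t : ℕ} (h1 : 1 ≤ t) (h : t ≤ T0 N) :
    (((t-1)/Mv N) % 2 = 0 ∧ cc N t = 0) ∨
      (((t-1)/Mv N) % 2 = 1 ∧ (cc N t = 1 ∨ cc N t = 2)) := by
  unfold cc
  rw [if_pos h]
  split_ifs with hpar hr
  · exact Or.inl ⟨hpar, rfl⟩
  · exact Or.inr ⟨by omega, Or.inl rfl⟩
  · exact Or.inr ⟨by omega, Or.inr rfl⟩

lemma ss_nonneg (hε1 : 0 < ε) (hε2 : 2*ε ≤ 1) (t : ℕ) : 0 ≤ ss N ε t := by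
  unfold ss
  split_ifs <;> linarith

/-- the color condition of the packing -/
lemma fopt_colors {i j : ℕ} (hi1 : 1 ≤ i) (hij : i < j) (hjn : j ≤ nv N)
    (hf : fopt N i = fopt N j) (hno : ∀ l, i < l → l < j → fopt N l ≠ fopt N i) :
    cc N i ≠ cc N j := by
  have hM := M_pos (N := N)
  have hMT0 : Mv N ≤ T0 N := by unfold T0; nlinarith
  rcases le_or_gt j (T0 N) with hj | hj
  · -- both in the zero part
    have hi : i ≤ T0 N := by omega
    have hfi : fopt N i = (i-1) % Mv N + 1 := by unfold fopt; rw [if_pos hi]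
    have hfj : fopt N j = (j-1) % Mv N + 1 := by unfold fopt; rw [if_pos hj]
    have hmod : (i-1) % Mv N = (j-1) % Mv N := by omega
    -- j = i + Mv N
    have hjeq : j = i + Mv N := by
      by_contra hne
      have hlb : i + Mv N ≤ j := by
        rcases Nat.lt_or_ge j (i + Mv N) with h' | h'
        · exfalso
          have hdvd : Mv N ∣ (j-1) - (i-1) :=
            (Nat.modEq_iff_dvd' (by omega)).mp hmod
          obtain ⟨q, hq⟩ := hdvd
          rcases Nat.eq_zero_or_pos q with rfl | hq1
          · omega
          · have : Mv N ≤ Mv N * q := Nat.le_mul_of_pos_right _ hq1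
            omega
        · exact h'
      have hl : i < i + Mv N ∧ i + Mv N < j := by omega
      apply hno (i + Mv N) hl.1 hl.2
      have hfl : fopt N (i + Mv N) = (i + Mv N - 1) % Mv N + 1 := by
        unfold fopt; rw [if_pos (by omega)]
      rw [hfl, hfi]
      have heq2 : i + Mv N - 1 = (i - 1) + Mv N := by omega
      rw [heq2, Nat.add_mod_right]
    -- parity differs
    have hdiv : (j-1) / Mv N = (i-1) / Mv N + 1 := by
      rw [hjeq]
      have : i + Mv N - 1 = (i-1) + 1 * Mv N := by omega
      rw [this, Nat.add_mul_div_right _ _ hM]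
    rcases zero_cc_cases hi1 hi with ⟨hp1, hc1⟩ | ⟨hp1, hc1⟩ <;>
      rcases zero_cc_cases (t := j) (by omega) hj with ⟨hp2, hc2⟩ | ⟨hp2, hc2⟩ <;>
      omega
  · rcases le_or_gt i (T0 N) with hi | hi
    · -- i zero part, j sized
      have h1 := cc_le2 (N := N) hi
      have h2 : ¬ (cc N j ≤ 2) := by rw [cc_le2_iff]; omega
      omega
    · -- both sized
      rcases le_or_gt j (TA N) with hjA | hjA
      · -- both in A
        rw [cc_A hi (by omega), cc_A (by omega) hjA]
        omega
      rcases le_or_gt j (TB N) with hjB | hjB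
      · -- j in B: f j ≥ 2; i: if i in A or C...; i < j ≤ TB so i in A or B
        rcases le_or_gt i (TA N) with hiA | hiA
        · -- i in A: f i = 1, f j ≥ 2
          exfalso
          have hfi : fopt N i = 1 := by unfold fopt; rw [if_neg (by omega), if_pos hiA]
          have hfj : fopt N j = j - TA N + 1 := by
            unfold fopt; rw [if_neg (by omega), if_neg (by omega), if_pos hjB]
          omega
        · -- both in B: equal f forces i = j
          exfalso
          have hfi : fopt N i = i - TA N + 1 := by
            unfold fopt; rw [if_neg (by omega), if_neg (by omega), if_pos (by omega)]
          have hfj : fopt N j = j - TA N + 1 := by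
            unfold fopt; rw [if_neg (by omega), if_neg (by omega), if_pos hjB]
          omega
      · -- j in C : f j = 1 ; i in A or C (if i in B, f i ≥ 2)
        rcases le_or_gt i (TA N) with hiA | hiA
        · rw [cc_A hi hiA, cc_C hjB]; omega
        rcases le_or_gt i (TB N) with hiB | hiB
        · exfalso
          have hfi : fopt N i = i - TA N + 1 := by
            unfold fopt; rw [if_neg (by omega), if_neg (by omega), if_pos hiB]
          have hfj : fopt N j = 1 := by
            unfold fopt; rw [if_neg (by omega), if_neg (by omega), if_neg (by omega)]
          omega
        · rw [cc_C hiB, cc_C hjB]; omega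

/-- size bound for the bins of the packing -/
lemma fopt_sizes (hN : 2 ≤ N) (hε1 : 0 < ε) (hεM : ε < 1 / (8 * (Mv N : ℝ))) (b : ℕ) :
    (∑ l ∈ (Finset.Icc 1 (nv N)).filter fun l => fopt N l = b, ss N ε l) ≤ 1 := by
  have hM := M_ge hN
  have hP := P_ge hN
  have hMR : (64:ℝ) ≤ (Mv N : ℝ) := by exact_mod_cast hM
  have hε2 : 2*ε ≤ 1 := by
    have h8 : (0:ℝ) < 8 * (Mv N : ℝ) := by linarith
    rw [lt_div_iff₀ h8] at hεM
    nlinarith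
  have hT0A := T0_le_TA (N := N)
  have hAB := TA_le_TB (N := N)
  have hBn := TB_le_nv (N := N)
  rcases eq_or_ne b 1 with rfl | hb1
  · -- bin 1 : all the small items
    have hbound : ∀ l ∈ (Finset.Icc 1 (nv N)).filter (fun l => fopt N l = 1),
        ss N ε l ≤ (if T0 N < l then 2*ε else 0) := by
      intro l hl
      simp only [Finset.mem_filter, Finset.mem_Icc] at hl
      rcases le_or_gt l (T0 N) with h | h
      · rw [ss_zero h, if_neg (by omega)]
      rw [if_pos h]
      rcases le_or_gt l (TA N) with h2 | h2
      · rw [ss_A h h2]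
      rcases le_or_gt l (TB N) with h3 | h3
      · exfalso
        have : fopt N l = l - TA N + 1 := by
          unfold fopt; rw [if_neg (by omega), if_neg (by omega), if_pos h3]
        omega
      · rw [ss_C h3]
    calc (∑ l ∈ (Finset.Icc 1 (nv N)).filter fun l => fopt N l = 1, ss N ε l)
        ≤ ∑ l ∈ (Finset.Icc 1 (nv N)).filter (fun l => fopt N l = 1),
            (if T0 N < l then 2*ε else 0) := Finset.sum_le_sum hbound
      _ ≤ ∑ l ∈ Finset.Icc 1 (nv N), (if T0 N < l then 2*ε else 0) := by
          apply Finset.sum_le_sum_of_subset_of_nonneg (Finset.filter_subset _ _)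
          intro l _ _
          split_ifs <;> linarith
      _ = ∑ l ∈ (Finset.Icc 1 (nv N)).filter (fun l => T0 N < l), 2*ε := by
          rw [Finset.sum_filter]
      _ = ((Finset.Icc 1 (nv N)).filter (fun l => T0 N < l)).card * (2*ε) := by
          rw [Finset.sum_const, nsmul_eq_mul]
      _ ≤ 1 := by
          have hfc : (Finset.Icc 1 (nv N)).filter (fun l => T0 N < l)
              = Finset.Icc (T0 N + 1) (nv N) := by
            ext x
            simp only [Finset.mem_filter, Finset.mem_Icc]
            omega
          rw [hfc, Nat.card_Icc]
          have hcard : (nv N + 1 - (T0 N + 1)) ≤ 4 * Mv N := by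
            have h1 : Pv N ≤ 2 * Mv N := Nat.sub_le _ _
            unfold nv TB TA
            omega
          have hcardR : ((nv N + 1 - (T0 N + 1) : ℕ) : ℝ) ≤ 4 * (Mv N : ℝ) := by
            exact_mod_cast hcard
          have h8 : (0:ℝ) < 8 * (Mv N : ℝ) := by linarith
          rw [lt_div_iff₀ h8] at hεM
          nlinarith [Nat.cast_nonneg (α := ℝ) (nv N + 1 - (T0 N + 1))]
  · -- other bins : at most one black item
    have hbound : ∀ l ∈ (Finset.Icc 1 (nv N)).filter (fun l => fopt N l = b),
        ss N ε l ≤ (if l = TA N + b - 1 then (1-ε) else 0) := by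
      intro l hl
      simp only [Finset.mem_filter, Finset.mem_Icc] at hl
      rcases le_or_gt l (T0 N) with h | h
      · rw [ss_zero h]
        split_ifs <;> linarith
      rcases le_or_gt l (TA N) with h2 | h2
      · exfalso
        have : fopt N l = 1 := by unfold fopt; rw [if_neg (by omega), if_pos h2]
        omega
      rcases le_or_gt l (TB N) with h3 | h3
      · have hfl : fopt N l = l - TA N + 1 := by
          unfold fopt; rw [if_neg (by omega), if_neg (by omega), if_pos h3]
        have : l = TA N + b - 1 := by omega
        rw [if_pos this, ss_B h2 h3]
      · exfalso
        have : fopt N l = 1 := by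
          unfold fopt; rw [if_neg (by omega), if_neg (by omega), if_neg (by omega)]
        omega
    calc (∑ l ∈ (Finset.Icc 1 (nv N)).filter fun l => fopt N l = b, ss N ε l)
        ≤ ∑ l ∈ (Finset.Icc 1 (nv N)).filter (fun l => fopt N l = b),
            (if l = TA N + b - 1 then (1-ε) else 0) := Finset.sum_le_sum hbound
      _ ≤ ∑ l ∈ Finset.Icc 1 (nv N), (if l = TA N + b - 1 then (1-ε) else 0) := by
          apply Finset.sum_le_sum_of_subset_of_nonneg (Finset.filter_subset _ _)
          intro l _ _
          split_ifs <;> linarith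
      _ ≤ 1 := by
          rw [Finset.sum_ite_eq' (Finset.Icc 1 (nv N)) (TA N + b - 1) (fun _ => (1-ε))]
          split_ifs <;> linarith

lemma fopt_packing (hN : 2 ≤ N) (hε1 : 0 < ε) (hεM : ε < 1 / (8 * (Mv N : ℝ))) :
    IsPacking (nv N) (Mv N) (ss N ε) (cc N) (fopt N) := by
  refine ⟨fun t h1 h2 => fopt_range h1 h2, fopt_sizes hN hε1 hεM, ?_⟩
  intro i j hi1 hij hjn hf hno
  exact fopt_colors hi1 hij hjn hf hno

/-- the volume lower bound: any packing uses at least `Mv N` bins -/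
lemma opt_lower (hN : 2 ≤ N) (hε1 : 0 < ε) (hεM : ε < 1 / (8 * (Mv N : ℝ)))
    {L : ℕ} {f : ℕ → ℕ} (hf : IsPacking (nv N) L (ss N ε) (cc N) f) : Mv N ≤ L := by
  obtain ⟨hf1, hf2, -⟩ := hf
  have hM := M_ge hN
  have hMR : (64:ℝ) ≤ (Mv N : ℝ) := by exact_mod_cast hM
  have hε2 : 2*ε ≤ 1 := by
    have h8 : (0:ℝ) < 8 * (Mv N : ℝ) := by linarith
    rw [lt_div_iff₀ h8] at hεM
    nlinarith
  have hT0A := T0_le_TA (N := N)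
  have hAB := TA_le_TB (N := N)
  have hBn := TB_le_nv (N := N)
  -- total volume is at most L
  have hvol : (∑ t ∈ Finset.Icc 1 (nv N), ss N ε t) ≤ (L : ℝ) := by
    rw [← Finset.sum_fiberwise_of_maps_to (g := fun t => f t) (t := Finset.Icc 1 L)
      (fun x hx => by
        rw [Finset.mem_Icc] at hx ⊢
        exact hf1 x hx.1 hx.2)]
    calc (∑ b ∈ Finset.Icc 1 L, ∑ t ∈ (Finset.Icc 1 (nv N)).filter fun t => f t = b, ss N ε t)
        ≤ ∑ b ∈ Finset.Icc 1 L, (1:ℝ) := Finset.sum_le_sum (fun b _ => hf2 b)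
      _ = L := by rw [Finset.sum_const, Nat.card_Icc, nsmul_eq_mul]; simp
  -- total volume is more than Mv N - 1
  have hlow : ((Mv N : ℝ) - 1) < ∑ t ∈ Finset.Icc 1 (nv N), ss N ε t := by
    have hsplit : ∑ t ∈ Finset.Ioc (TA N) (nv N), ss N ε t
        = ∑ t ∈ Finset.Ioc (TA N) (TB N), ss N ε t
          + ∑ t ∈ Finset.Ioc (TB N) (nv N), ss N ε t := by
      rw [← Finset.sum_Ioc_consecutive _ hAB hBn]
    have hB : ∑ t ∈ Finset.Ioc (TA N) (TB N), ss N ε t = (Mv N - 1 : ℕ) * (1 - ε) := by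
      have hcongr : ∀ t ∈ Finset.Ioc (TA N) (TB N), ss N ε t = 1 - ε := by
        intro t ht
        rw [Finset.mem_Ioc] at ht
        exact ss_B ht.1 ht.2
      rw [Finset.sum_congr rfl hcongr, Finset.sum_const, Nat.card_Ioc, nsmul_eq_mul]
      congr 2
      unfold TB
      omega
    have hC : ∑ t ∈ Finset.Ioc (TB N) (nv N), ss N ε t = (Mv N - 2 : ℕ) * (2*ε) := by
      have hcongr : ∀ t ∈ Finset.Ioc (TB N) (nv N), ss N ε t = 2*ε := by
        intro t ht
        rw [Finset.mem_Ioc] at ht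
        exact ss_C ht.1
      rw [Finset.sum_congr rfl hcongr, Finset.sum_const, Nat.card_Ioc, nsmul_eq_mul]
      congr 2
      unfold nv
      omega
    have hsub : ∑ t ∈ Finset.Ioc (TA N) (nv N), ss N ε t
        ≤ ∑ t ∈ Finset.Icc 1 (nv N), ss N ε t := by
      apply Finset.sum_le_sum_of_subset_of_nonneg
      · intro x hx
        rw [Finset.mem_Ioc] at hx
        rw [Finset.mem_Icc]
        have h0 : 1 ≤ T0 N := by have := M_pos (N := N); unfold T0; nlinarith
        omega
      · intro t _ _
        exact ss_nonneg hε1 hε2 t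
    rw [hsplit, hB, hC] at hsub
    have hM1 : ((Mv N - 1 : ℕ) : ℝ) = (Mv N : ℝ) - 1 := by
      rw [Nat.cast_sub (by omega)]; simp
    have hM2 : ((Mv N - 2 : ℕ) : ℝ) = (Mv N : ℝ) - 2 := by
      rw [Nat.cast_sub (by omega)]; simp
    rw [hM1, hM2] at hsub
    nlinarith
  have h1 : ((Mv N : ℝ) - 1) < (L : ℝ) := lt_of_lt_of_le hlow hvol
  have h2 : (Mv N : ℝ) < (L : ℝ) + 1 := by linarith
  have h3 : Mv N < L + 1 := by exact_mod_cast h2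
  omega

/-- the optimum is exactly `Mv N` -/
lemma opt_eq (hN : 2 ≤ N) (hε1 : 0 < ε) (hεM : ε < 1 / (8 * (Mv N : ℝ))) :
    OPTcost (nv N) (ss N ε) (cc N) = Mv N := by
  apply le_antisymm
  · exact Nat.sInf_le ⟨fopt N, fopt_packing hN hε1 hεM⟩
  · apply le_csInf
      (⟨Mv N, fopt N, fopt_packing hN hε1 hεM⟩ :
        Set.Nonempty {L | ∃ f, IsPacking (nv N) L (ss N ε) (cc N) f})
    rintro L ⟨f, hf⟩
    exact opt_lower hN hε1 hεM hf

end Opt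
lemma Mv_cast (N : ℕ) : ((Mv N : ℕ) : ℝ) = (4:ℝ)^(N+1) := by
  unfold Mv
  push_cast
  ring

/-- for every `N ≥ 2`, with `M = 4^(N+1)` and `m = (3/4)^N·M = 4·3^N`, and every
`0 < ε < 1/(8M)`, there is a colorful bin packing instance (with colors from ℕ) with
`OPT = M` on which every run of BaP uses at least `4M − m` bins.  Consequently, the asymptotic
competitive ratio of BaP is at least `4`: for every `ρ < 4` and every `K` there is an instance
with `OPT ≥ K` on which every run of BaP uses at least `ρ·OPT` bins. -/
theorem bap_lower_bound_four :
    (∀ N : ℕ, 2 ≤ N → ∀ ε : ℝ, 0 < ε → ε < 1 / (8 * (4 : ℝ) ^ (N + 1)) →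
      ∃ (n : ℕ) (s : ℕ → ℝ) (c : ℕ → ℕ),
        (∀ t, 1 ≤ t → t ≤ n → s t ∈ Set.Icc (0 : ℝ) 1) ∧
        OPTcost n s c = 4 ^ (N + 1) ∧
        ∀ R : BaPRun n c, 4 * 4 ^ (N + 1) - 4 * 3 ^ N ≤ bapCost s R) ∧
    (∀ ρ : ℝ, ρ < 4 → ∀ K : ℕ,
      ∃ (n : ℕ) (s : ℕ → ℝ) (c : ℕ → ℕ),
        (∀ t, 1 ≤ t → t ≤ n → s t ∈ Set.Icc (0 : ℝ) 1) ∧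
        K ≤ OPTcost n s c ∧
        ∀ R : BaPRun n c, ρ * (OPTcost n s c : ℝ) ≤ (bapCost s R : ℝ)) := by
  have main : ∀ N : ℕ, 2 ≤ N → ∀ ε : ℝ, 0 < ε → ε < 1 / (8 * (4 : ℝ) ^ (N + 1)) →
      (∀ t, 1 ≤ t → t ≤ nv N → ss N ε t ∈ Set.Icc (0 : ℝ) 1) ∧
      OPTcost (nv N) (ss N ε) (cc N) = 4 ^ (N + 1) ∧
      ∀ R : BaPRun (nv N) (cc N), 4 * 4 ^ (N + 1) - 4 * 3 ^ N ≤ bapCost (ss N ε) R := by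
    intro N hN ε hε1 hεM'
    have hεM : ε < 1 / (8 * (Mv N : ℝ)) := by rw [Mv_cast]; exact hεM'
    have hM := M_ge hN
    have hMR : (64:ℝ) ≤ (Mv N : ℝ) := by exact_mod_cast hM
    have hε2 : 2*ε ≤ 1 := by
      have h8 : (0:ℝ) < 8 * (Mv N : ℝ) := by linarith
      rw [lt_div_iff₀ h8] at hεM
      nlinarith
    refine ⟨?_, ?_, ?_⟩
    · intro t _ _
      constructor
      · exact ss_nonneg hε1 hε2 t
      · unfold ss
        split_ifs <;> linarith
    · rw [opt_eq hN hε1 hεM]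
      unfold Mv
      rfl
    · intro R
      exact run_cost hN hε1 hε2
  constructor
  · intro N hN ε hε1 hεM'
    exact ⟨nv N, ss N ε, cc N, main N hN ε hε1 hεM'⟩
  · intro ρ hρ K
    obtain ⟨N₁, hN₁⟩ := exists_pow_lt_of_lt_one (show (0:ℝ) < 4 - ρ by linarith)
      (show (3/4 : ℝ) < 1 by norm_num)
    set N := max (max 2 N₁) K with hNdef
    have hN2 : 2 ≤ N := le_trans (le_max_left 2 N₁) (le_max_left _ K)
    have hNN₁ : N₁ ≤ N := le_trans (le_max_right 2 N₁) (le_max_left _ K)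
    have hNK : K ≤ N := le_max_right _ K
    have hpow : (3/4 : ℝ)^N ≤ (3/4 : ℝ)^N₁ :=
      pow_le_pow_of_le_one (by norm_num) (by norm_num) hNN₁
    set ε : ℝ := 1 / (16 * (4:ℝ)^(N+1)) with hεdef
    have h4pos : (0:ℝ) < (4:ℝ)^(N+1) := by positivity
    have hε1 : 0 < ε := by rw [hεdef]; positivity
    have hεM' : ε < 1 / (8 * (4 : ℝ) ^ (N + 1)) := by
      rw [hεdef, div_lt_div_iff₀ (by positivity) (by positivity)]
      nlinarith
    obtain ⟨hsz, hopt, hcost⟩ := main N hN2 ε hε1 hεM'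
    refine ⟨nv N, ss N ε, cc N, hsz, ?_, ?_⟩
    · rw [hopt]
      calc K ≤ N := hNK
      _ ≤ 4^N := Nat.le_of_lt (Nat.lt_pow_self (by norm_num))
      _ ≤ 4^(N+1) := Nat.pow_le_pow_right (by norm_num) (by omega)
    · intro R
      have hc := hcost R
      have hsub : (4:ℕ) * 3 ^ N ≤ 4 * 4 ^ (N + 1) := by
        have : (3:ℕ)^N ≤ 4^(N+1) :=
          le_trans (Nat.pow_le_pow_left (by norm_num) N)
            (Nat.pow_le_pow_right (by norm_num) (by omega))
        omega
      have hcR : (4 * 4 ^ (N + 1) - 4 * 3 ^ N : ℝ) ≤ (bapCost (ss N ε) R : ℝ) := by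
        have := Nat.cast_le (α := ℝ) |>.2 hc
        rw [Nat.cast_sub hsub] at this
        push_cast at this ⊢
        convert this using 2
      rw [hopt]
      have hcast4 : ((4 ^ (N+1) : ℕ) : ℝ) = (4:ℝ)^(N+1) := by push_cast; ring
      rw [hcast4]
      have hkey : 4 * (3:ℝ)^N ≤ (4 - ρ) * (4:ℝ)^(N+1) := by
        have h1 : (3/4 : ℝ)^N < 4 - ρ := lt_of_le_of_lt hpow hN₁
        have h2 : (3/4 : ℝ)^N * (4:ℝ)^(N+1) ≤ (4 - ρ) * (4:ℝ)^(N+1) := by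
          apply mul_le_mul_of_nonneg_right (le_of_lt h1) (le_of_lt h4pos)
        have h3 : (3/4 : ℝ)^N * (4:ℝ)^(N+1) = 4 * (3:ℝ)^N := by
          rw [div_pow, pow_succ]
          have h4N : (4:ℝ)^N ≠ 0 := by positivity
          field_simp
        rw [h3] at h2
        exact h2
      have : ρ * (4:ℝ)^(N+1) ≤ 4 * (4:ℝ)^(N+1) - 4 * (3:ℝ)^N := by nlinarith
      refine le_trans this (le_trans ?_ hcR)
      push_cast
      linarith
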